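/- arXiv:1507.04647 — 5 statements merged into one kernel-verified Lean document; each statement's English description precedes it below -/
import Mathlib

section
/- Let d = (d_1, ..., d_n) be a non-increasing sequence of positive integers with even sum at most 2n - 2, and let k ∈ [n]. If Σ_{i=1}^k d_i ≥ n - k and 0 ≤ Σ_{i=k+1}^n d_i - Σ_{i=1}^k d_i ≤ max{0, 2(n_{≥2}(d) - k) - 2}, then there exists a forest F with vertex set {u_1, ..., u_n} and d_F(u_i) = d_i for all i such that {u_1, ..., u_k} is an independent dominating set of F. -/
open Finset

/-- The degree of a vertex in a simple graph. -/
noncomputable def deg {V : Type*} (G : SimpleGraph V) (v : V) : ℕ := Nat.card {u // G.Adj v u}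

/-- `D` is a dominating set of `G`. -/
def DomSet {V : Type*} (G : SimpleGraph V) (D : Set V) : Prop := ∀ v ∉ D, ∃ u ∈ D, G.Adj u v

/-- `S` is an independent set of `G`. -/
def IndepSet {V : Type*} (G : SimpleGraph V) (S : Set V) : Prop :=
  ∀ u ∈ S, ∀ v ∈ S, ¬ G.Adj u v

/-- The domination number of `G`. -/
noncomputable def domNum {V : Type*} [Fintype V] (G : SimpleGraph V) : ℕ :=
  sInf {k | ∃ D : Finset V, D.card = k ∧ DomSet G ↑D}

/-- The independence number of `G`. -/
noncomputable def indepNum {V : Type*} [Fintype V] (G : SimpleGraph V) : ℕ :=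
  sSup {k | ∃ S : Finset V, S.card = k ∧ IndepSet G ↑S}

/-- Sum of the first `k` entries `d_1 + ... + d_k` (0-indexed: indices `< k`). -/
def psum {n : ℕ} (d : Fin n → ℕ) (k : ℕ) : ℕ := ∑ i : Fin n, if (i : ℕ) < k then d i else 0

/-- Sum of the remaining entries `d_{k+1} + ... + d_n` (0-indexed: indices `≥ k`). -/
def ssum {n : ℕ} (d : Fin n → ℕ) (k : ℕ) : ℕ := ∑ i : Fin n, if k ≤ (i : ℕ) then d i else 0

/-- Slater's bound `sl(d) = min{k ∈ [n] : d_1 + ... + d_k ≥ n - k}`. -/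
noncomputable def slater (n : ℕ) (d : Fin n → ℕ) : ℕ := sInf {k | 1 ≤ k ∧ k ≤ n ∧ n - k ≤ psum d k}

/-- The annihilation number `a(d) = n - min{k ∈ [n] : Σ_{i≤k} d_i ≥ Σ_{i>k} d_i}`. -/
noncomputable def annih (n : ℕ) (d : Fin n → ℕ) : ℕ := n - sInf {k | 1 ≤ k ∧ k ≤ n ∧ ssum d k ≤ psum d k}

/-- The number of entries of `d` equal to `j`. -/
def nCount {n : ℕ} (d : Fin n → ℕ) (j : ℕ) : ℕ := (Finset.univ.filter fun i => d i = j).card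

/-- The number of entries of `d` that are at least `2`. -/
def nGe2 {n : ℕ} (d : Fin n → ℕ) : ℕ := (Finset.univ.filter fun i => 2 ≤ d i).card

/-- `F` is a forest realization of the degree sequence `d`. -/
def IsForestReal {n : ℕ} (d : Fin n → ℕ) (F : SimpleGraph (Fin n)) : Prop :=
  F.IsAcyclic ∧ ∀ i, deg F i = d i

/-- The minimum domination number over all forest realizations of `d`. -/
noncomputable def gammaFmin {n : ℕ} (d : Fin n → ℕ) : ℕ :=
  sInf {m | ∃ F : SimpleGraph (Fin n), IsForestReal d F ∧ domNum F = m}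

/-- The maximum independence number over all forest realizations of `d`. -/
noncomputable def alphaFmax {n : ℕ} (d : Fin n → ℕ) : ℕ :=
  sSup {m | ∃ F : SimpleGraph (Fin n), IsForestReal d F ∧ indepNum F = m}



lemma exists_last_edge {V : Type*} {G : SimpleGraph V} :
    ∀ {a b : V} (q : G.Walk a b), ¬ q.Nil → ∃ y, G.Adj y b ∧ s(y, b) ∈ q.edges := by
  intro a b q
  induction q with
  | nil => intro h; exact absurd SimpleGraph.Walk.nil_nil h
  | cons h r ih =>
    intro _
    by_cases hr : r.Nil
    · cases r with
      | nil => exact ⟨_, h, by simp⟩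
      | cons h' r' => simp at hr
    · obtain ⟨y, hy, hmem⟩ := ih hr
      exact ⟨y, hy, by simp [hmem]⟩

lemma acyc_of_rank {α : Type*} (p : α → Option α) (ρ : α → ℕ)
    (hp : ∀ v w, p v = some w → ρ w < ρ v) :
    (SimpleGraph.fromRel (fun a b => p a = some b)).IsAcyclic := by
  classical
  set G := SimpleGraph.fromRel (fun a b => p a = some b) with hG
  have key : ∀ x y : α, G.Adj x y → ρ y ≤ ρ x → p x = some y := by
    intro x y hxy hle
    rcases hxy.2 with h | h
    · exact h
    · exact absurd (hp y x h) (by omega)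
  intro v c hc
  have hsupne : c.support.toFinset.Nonempty := by
    exact ⟨v, List.mem_toFinset.2 (SimpleGraph.Walk.start_mem_support c)⟩
  obtain ⟨u, hu, hmax⟩ := Finset.exists_max_image c.support.toFinset ρ hsupne
  rw [List.mem_toFinset] at hu
  set c' := c.rotate u hu with hc'
  have hc'cyc : c'.IsCycle := hc.rotate hu
  have hsub : ∀ x ∈ c'.support, ρ x ≤ ρ u := by
    intro x hx
    rcases SimpleGraph.Walk.support_eq_cons c' ▸ hx with hx'
    rw [SimpleGraph.Walk.support_eq_cons c'] at hx
    rcases List.mem_cons.1 hx with rfl | hx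
    · exact le_rfl
    · have hperm := SimpleGraph.Walk.support_rotate c u hu
      have : x ∈ c.support.tail := (hperm.mem_iff).1 hx
      exact hmax x (List.mem_toFinset.2 (List.mem_of_mem_tail this))
  -- decompose c'
  cases hcons : c' with
  | nil => exact hc'cyc.ne_nil hcons
  | cons hadj q =>
    rename_i x
    -- x = c'.snd, q : Walk x u
    have hqnil : ¬ q.Nil := by
      intro hq
      have h3 := hc'cyc.three_le_length
      rw [hcons] at h3
      simp [SimpleGraph.Walk.nil_iff_length_eq.1 hq] at h3
    obtain ⟨y, hyadj, hymem⟩ := exists_last_edge q hqnil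
    -- trail: first edge not in q.edges
    have htrail : c'.IsTrail := hc'cyc.isTrail
    have hnodup : c'.edges.Nodup := htrail.edges_nodup
    rw [hcons] at hnodup
    simp only [SimpleGraph.Walk.edges_cons, List.nodup_cons] at hnodup
    have hxy : x ≠ y := by
      intro h
      subst h
      exact hnodup.1 (by simpa [Sym2.eq_swap] using hymem)
    -- ρ x ≤ ρ u, ρ y ≤ ρ u
    have hxsup : x ∈ c'.support := by
      rw [hcons]; simp
    have hysup : y ∈ c'.support := by
      rw [hcons]
      simp only [SimpleGraph.Walk.support_cons, List.mem_cons]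
      exact Or.inr (SimpleGraph.Walk.fst_mem_support_of_mem_edges q hymem)
    have h1 : p u = some x := key u x hadj (hsub x hxsup)
    have h2 : p u = some y := key u y hyadj.symm (hsub y hysup)
    rw [h1] at h2
    exact hxy (Option.some_injective _ h2)



structure GF (V A D : Finset ℕ) (d : ℕ → ℕ) (p : ℕ → Option ℕ) (ρ : ℕ → ℕ) : Prop where
  mem : ∀ v w, p v = some w → v ∈ V ∧ w ∈ V
  rk : ∀ v w, p v = some w → ρ w < ρ v
  degree : ∀ v ∈ V, d v = (if (p v).isSome then 1 else 0) + (V.filter fun u => p u = some v).card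
  indep : ∀ a ∈ A, ∀ b ∈ A, p a ≠ some b
  dom : ∀ b ∈ V, b ∉ A → b ∉ D → ∃ a ∈ A, p b = some a ∨ p a = some b

def Good (V A D : Finset ℕ) (d : ℕ → ℕ) : Prop := ∃ p ρ, GF V A D d p ρ

lemma GF.pnone {V A D d p ρ} (h : GF V A D d p ρ) {x : ℕ} (hx : x ∉ V) : p x = none := by
  cases hp : p x with
  | none => rfl
  | some y => exact absurd (h.mem x y hp).1 hx

/-- Core extension: add a pendant vertex `v` (degree 1) attached to `w ∈ V`. -/
lemma extend_core {V A D : Finset ℕ} {d : ℕ → ℕ} {p : ℕ → Option ℕ} {ρ : ℕ → ℕ} {v w : ℕ}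
    (h : GF V A D (Function.update d w (d w - 1)) p ρ)
    (hv : v ∉ V) (hw : w ∈ V) (hdv : d v = 1) (hdw : 1 ≤ d w) :
    ∃ (p' : ℕ → Option ℕ) (ρ' : ℕ → ℕ), (∀ x, x ≠ v → p' x = p x) ∧ p' v = some w ∧
      (∀ x y, p' x = some y → x ∈ insert v V ∧ y ∈ insert v V) ∧
      (∀ x y, p' x = some y → ρ' y < ρ' x) ∧
      (∀ x ∈ insert v V, d x =
        (if (p' x).isSome then 1 else 0) + ((insert v V).filter fun u => p' u = some x).card) := by
  classical
  set M := (V.sup ρ) + 1 with hM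
  refine ⟨Function.update p v (some w), Function.update ρ v M, ?_, ?_, ?_, ?_, ?_⟩
  · intro x hx; rw [Function.update_of_ne hx]
  · simp
  · intro x y hxy
    by_cases hx : x = v
    · subst hx; rw [Function.update_self] at hxy
      cases hxy; exact ⟨mem_insert_self _ _, mem_insert_of_mem hw⟩
    · rw [Function.update_of_ne hx] at hxy
      obtain ⟨h1, h2⟩ := h.mem x y hxy
      exact ⟨mem_insert_of_mem h1, mem_insert_of_mem h2⟩
  · intro x y hxy
    by_cases hx : x = v
    · subst hx; rw [Function.update_self] at hxy
      cases hxy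
      rw [Function.update_self, Function.update_of_ne (show w ≠ x from fun hwv => hv (hwv ▸ hw))]
      have := Finset.le_sup (f := ρ) hw
      omega
    · rw [Function.update_of_ne hx] at hxy
      obtain ⟨h1, h2⟩ := h.mem x y hxy
      have hyv : y ≠ v := fun hyv => hv (hyv ▸ h2)
      rw [Function.update_of_ne hx, Function.update_of_ne hyv]
      exact h.rk x y hxy
  · intro x hx
    rcases mem_insert.1 hx with rfl | hxV
    · -- x = v
      rw [Function.update_self]
      have : ((insert x V).filter fun u => Function.update p x (some w) u = some x) = ∅ := by
        rw [Finset.filter_eq_empty_iff]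
        intro u hu
        rcases mem_insert.1 hu with rfl | huV
        · rw [Function.update_self]
          intro hcon
          exact hv (((Option.some_injective _ hcon) ▸ hw : u ∈ V))
        · have huv : u ≠ x := fun hc => hv (hc ▸ huV)
          rw [Function.update_of_ne huv]
          intro hcon
          exact hv ((h.mem u x hcon).2)
      rw [this]
      simp [hdv]
    · -- x ∈ V
      have hxv : x ≠ v := fun hc => hv (hc ▸ hxV)
      rw [Function.update_of_ne hxv]
      have hdegx := h.degree x hxV
      by_cases hxw : x = w
      · subst hxw
        rw [Function.update_self] at hdegx
        have hfe : ((insert v V).filter fun u => Function.update p v (some x) u = some x)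
            = insert v (V.filter fun u => p u = some x) := by
          ext u
          simp only [mem_filter, mem_insert]
          constructor
          · rintro ⟨hu, hpu⟩
            rcases hu with rfl | huV
            · exact Or.inl rfl
            · have huv : u ≠ v := fun hc => hv (hc ▸ huV)
              rw [Function.update_of_ne huv] at hpu
              exact Or.inr ⟨huV, hpu⟩
          · rintro (rfl | ⟨huV, hpu⟩)
            · exact ⟨Or.inl rfl, by simp⟩
            · have huv : u ≠ v := fun hc => hv (hc ▸ huV)
              exact ⟨Or.inr huV, by rw [Function.update_of_ne huv]; exact hpu⟩
        rw [hfe, Finset.card_insert_of_notMem (fun hc => hv (mem_filter.1 hc).1)]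
        omega
      · rw [Function.update_of_ne hxw] at hdegx
        have hfe : ((insert v V).filter fun u => Function.update p v (some w) u = some x)
            = V.filter fun u => p u = some x := by
          ext u
          simp only [mem_filter, mem_insert]
          constructor
          · rintro ⟨hu, hpu⟩
            rcases hu with rfl | huV
            · rw [Function.update_self] at hpu
              exact absurd (Option.some_injective _ hpu).symm hxw
            · have huv : u ≠ v := fun hc => hv (hc ▸ huV)
              rw [Function.update_of_ne huv] at hpu
              exact ⟨huV, hpu⟩
          · rintro ⟨huV, hpu⟩
            have huv : u ≠ v := fun hc => hv (hc ▸ huV)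
            exact ⟨Or.inr huV, by rw [Function.update_of_ne huv]; exact hpu⟩
        rw [hfe]
        omega

/-- M1/M1'-type: attach `v ∉ A` to `w ∈ A`. -/
lemma good_attach_toA {V A D : Finset ℕ} {d : ℕ → ℕ} {v w : ℕ}
    (hG : Good V A D (Function.update d w (d w - 1)))
    (hv : v ∉ V) (hw : w ∈ V) (hdv : d v = 1) (hdw : 1 ≤ d w)
    (hvA : v ∉ A) (hwA : w ∈ A) :
    Good (insert v V) A D d := by
  obtain ⟨p, ρ, h⟩ := hG
  obtain ⟨p', ρ', hagree, hpv, hmem, hrk, hdeg⟩ := extend_core h hv hw hdv hdw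
  refine ⟨p', ρ', hmem, hrk, hdeg, ?_, ?_⟩
  · intro a ha b hb
    have hav : a ≠ v := fun hc => hvA (hc ▸ ha)
    rw [hagree a hav]
    exact h.indep a ha b hb
  · intro b hb hbA hbD
    rcases mem_insert.1 hb with rfl | hbV
    · exact ⟨w, hwA, Or.inl hpv⟩
    · obtain ⟨a, haA, hor⟩ := h.dom b hbV hbA hbD
      have hav : a ≠ v := fun hc => hvA (hc ▸ haA)
      have hbv : b ≠ v := fun hc => hv (hc ▸ hbV)
      exact ⟨a, haA, by rw [hagree b hbv, hagree a hav]; exact hor⟩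

/-- M1'→B / C2-type: attach exempt `v` (v ∈ D-final) to any `w ∉ A`. -/
lemma good_attach_exempt {V A D : Finset ℕ} {d : ℕ → ℕ} {v w : ℕ}
    (hG : Good V A D (Function.update d w (d w - 1)))
    (hv : v ∉ V) (hw : w ∈ V) (hdv : d v = 1) (hdw : 1 ≤ d w)
    (hvA : v ∉ A) :
    Good (insert v V) A (insert v D) d := by
  obtain ⟨p, ρ, h⟩ := hG
  obtain ⟨p', ρ', hagree, hpv, hmem, hrk, hdeg⟩ := extend_core h hv hw hdv hdw
  refine ⟨p', ρ', hmem, hrk, hdeg, ?_, ?_⟩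
  · intro a ha b hb
    have hav : a ≠ v := fun hc => hvA (hc ▸ ha)
    rw [hagree a hav]
    exact h.indep a ha b hb
  · intro b hb hbA hbD
    have hbv : b ≠ v := fun hc => hbD (hc ▸ mem_insert_self v D)
    rcases mem_insert.1 hb with rfl | hbV
    · exact absurd rfl hbv
    · obtain ⟨a, haA, hor⟩ := h.dom b hbV hbA (fun hc => hbD (mem_insert_of_mem hc))
      have hav : a ≠ v := fun hc => hvA (hc ▸ haA)
      exact ⟨a, haA, by rw [hagree b hbv, hagree a hav]; exact hor⟩

/-- M2-type: attach a new `A`-vertex `v` to `w ∉ A`; `w` becomes dominated. -/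
lemma good_attach_fromA {V A D : Finset ℕ} {d : ℕ → ℕ} {v w : ℕ}
    (hG : Good V A (insert w D) (Function.update d w (d w - 1)))
    (hv : v ∉ V) (hw : w ∈ V) (hdv : d v = 1) (hdw : 1 ≤ d w)
    (hvA : v ∉ A) (hwA : w ∉ A) :
    Good (insert v V) (insert v A) D d := by
  obtain ⟨p, ρ, h⟩ := hG
  obtain ⟨p', ρ', hagree, hpv, hmem, hrk, hdeg⟩ := extend_core h hv hw hdv hdw
  refine ⟨p', ρ', hmem, hrk, hdeg, ?_, ?_⟩
  · intro a ha b hb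
    rcases mem_insert.1 ha with rfl | haA
    · rw [hpv]
      intro hc
      have hwb : w = b := Option.some_injective _ hc
      rcases mem_insert.1 hb with hba | hbA
      · exact hv (hba ▸ hwb ▸ hw)
      · exact hwA (hwb ▸ hbA)
    · have hav : a ≠ v := fun hc => hvA (hc ▸ haA)
      rw [hagree a hav]
      intro hc
      rcases mem_insert.1 hb with rfl | hbA
      · exact hv ((h.mem a b hc).2)
      · exact h.indep a haA b hbA hc
  · intro b hb hbA hbD
    have hbv : b ≠ v := fun hc => hbA (hc ▸ mem_insert_self v A)
    rcases mem_insert.1 hb with rfl | hbV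
    · exact absurd rfl hbv
    · by_cases hbw : b = w
      · subst hbw
        exact ⟨v, mem_insert_self _ _, Or.inr hpv⟩
      · obtain ⟨a, haA, hor⟩ := h.dom b hbV (fun hc => hbA (mem_insert_of_mem hc))
          (fun hc => (mem_insert.1 hc).elim hbw hbD)
        have hav : a ≠ v := fun hc => hvA (hc ▸ haA)
        exact ⟨a, mem_insert_of_mem haA, by rw [hagree b hbv, hagree a hav]; exact hor⟩

/-- Add an isolated edge `v–w` (both new, both degree 1).
`v` is the child, `w` the root. -/
lemma good_pair {V A' D' A D : Finset ℕ} {d : ℕ → ℕ} {v w : ℕ}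
    (hG : Good V A' D' d)
    (hv : v ∉ V) (hwV : w ∉ V) (hvw : v ≠ w)
    (hdv : d v = 1) (hdw : d w = 1)
    (hA : ∀ a, a ∈ A ↔ a ∈ A' ∨ (a = w ∧ w ∈ A))
    (hD'sub : D' ⊆ D)
    (hvA : v ∉ A)
    (hvdom : v ∈ D ∨ w ∈ A)
    (hwdom : w ∈ A ∨ w ∈ D) :
    Good (insert v (insert w V)) A D d := by
  classical
  obtain ⟨p, ρ, h⟩ := hG
  set M := (V.sup ρ) + 1 with hM
  set p' := Function.update p v (some w) with hp'
  set ρ' := Function.update (Function.update ρ w M) v (M + 1) with hρ'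
  have hpw : p w = none := h.pnone hwV
  have hpvagree : ∀ x, x ≠ v → p' x = p x := by
    intro x hx; rw [hp', Function.update_of_ne hx]
  have hA'A : ∀ a ∈ A', a ∈ A := fun a ha => (hA a).2 (Or.inl ha)
  have hfil : ∀ z, z ≠ w →
      ((insert v (insert w V)).filter fun u => p' u = some z) =
        V.filter fun u => p u = some z := by
    intro z hzw
    ext u
    simp only [mem_filter, mem_insert]
    constructor
    · rintro ⟨hu, hpu⟩
      rcases hu with rfl | hu
      · rw [hp', Function.update_self] at hpu
        exact absurd (Option.some_injective _ hpu) (Ne.symm hzw)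
      · rcases hu with rfl | hu
        · rw [hpvagree u (Ne.symm hvw), hpw] at hpu; cases hpu
        · have huv : u ≠ v := fun hc => hv (hc ▸ hu)
          rw [hpvagree u huv] at hpu
          exact ⟨hu, hpu⟩
    · rintro ⟨hu, hpu⟩
      have huv : u ≠ v := fun hc => hv (hc ▸ hu)
      exact ⟨Or.inr (Or.inr hu), by rw [hpvagree u huv]; exact hpu⟩
  refine ⟨p', ρ', ?_, ?_, ?_, ?_, ?_⟩
  · intro x y hxy
    by_cases hx : x = v
    · subst hx
      rw [hp', Function.update_self] at hxy
      cases hxy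
      exact ⟨mem_insert_self _ _, mem_insert_of_mem (mem_insert_self _ _)⟩
    · rw [hpvagree x hx] at hxy
      obtain ⟨h1, h2⟩ := h.mem x y hxy
      exact ⟨mem_insert_of_mem (mem_insert_of_mem h1),
        mem_insert_of_mem (mem_insert_of_mem h2)⟩
  · intro x y hxy
    by_cases hx : x = v
    · subst hx
      rw [hp', Function.update_self] at hxy
      cases hxy
      rw [hρ', Function.update_self, Function.update_of_ne (Ne.symm hvw), Function.update_self]
      omega
    · rw [hpvagree x hx] at hxy
      obtain ⟨h1, h2⟩ := h.mem x y hxy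
      have hxw : x ≠ w := fun hc => hwV (hc ▸ h1)
      have hyv : y ≠ v := fun hc => hv (hc ▸ h2)
      have hyw : y ≠ w := fun hc => hwV (hc ▸ h2)
      have hrky := h.rk x y hxy
      have hle1 := Finset.le_sup (f := ρ) h1
      have hle2 := Finset.le_sup (f := ρ) h2
      rw [hρ', Function.update_of_ne hx, Function.update_of_ne hxw,
        Function.update_of_ne hyv, Function.update_of_ne hyw]
      exact hrky
  · intro x hx
    rcases mem_insert.1 hx with rfl | hx
    · -- x = v : parent w, no children
      have hemp : ((insert x (insert w V)).filter fun u => p' u = some x) = ∅ := by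
        rw [Finset.filter_eq_empty_iff]
        intro u hu
        rcases mem_insert.1 hu with rfl | hu
        · rw [hp', Function.update_self]
          intro hc
          exact hvw ((Option.some_injective _ hc).symm)
        · rcases mem_insert.1 hu with rfl | hu
          · rw [hpvagree u (Ne.symm hvw), hpw]; simp
          · have huv : u ≠ x := fun hc => hv (hc ▸ hu)
            rw [hpvagree u huv]
            intro hc
            exact hv ((h.mem u x hc).2)
      rw [hemp, hp']
      simp [hdv]
    rcases mem_insert.1 hx with rfl | hx
    · -- x = w : no parent, child v
      have hfw : ((insert v (insert x V)).filter fun u => p' u = some x) = {v} := by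
        ext u
        simp only [mem_filter, mem_insert, mem_singleton]
        constructor
        · rintro ⟨hu, hpu⟩
          rcases hu with rfl | hu
          · rfl
          · rcases hu with rfl | hu
            · rw [hpvagree u (Ne.symm hvw), hpw] at hpu; cases hpu
            · have huv : u ≠ v := fun hc => hv (hc ▸ hu)
              rw [hpvagree u huv] at hpu
              exact absurd ((h.mem u x hpu).2) hwV
        · rintro rfl
          exact ⟨Or.inl rfl, by rw [hp', Function.update_self]⟩
      rw [hfw, hpvagree x (Ne.symm hvw), hpw]
      simpa using hdw
    · -- x ∈ V
      have hxv : x ≠ v := fun hc => hv (hc ▸ hx)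
      have hxw : x ≠ w := fun hc => hwV (hc ▸ hx)
      rw [hfil x hxw, hpvagree x hxv]
      exact h.degree x hx
  · -- indep
    intro a ha b hb
    have hav : a ≠ v := fun hc => hvA (hc ▸ ha)
    rcases (hA a).1 ha with haA' | ⟨haw, _⟩
    · rw [hpvagree a hav]
      intro hc
      rcases (hA b).1 hb with hbA' | ⟨hbw, _⟩
      · exact h.indep a haA' b hbA' hc
      · exact hwV (hbw ▸ (h.mem a b hc).2)
    · rw [haw, hpvagree w (Ne.symm hvw), hpw]
      simp
  · -- dom
    intro b hb hbA hbD
    rcases mem_insert.1 hb with rfl | hb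
    · rcases hvdom with hD | hwA
      · exact absurd hD hbD
      · exact ⟨w, hwA, Or.inl (by rw [hp', Function.update_self])⟩
    rcases mem_insert.1 hb with rfl | hb
    · rcases hwdom with hwA | hwD
      · exact absurd hwA hbA
      · exact absurd hwD hbD
    · have hbv : b ≠ v := fun hc => hv (hc ▸ hb)
      obtain ⟨a, haA', hor⟩ := h.dom b hb (fun hc => hbA (hA'A b hc))
        (fun hc => hbD (hD'sub hc))
      have hav : a ≠ v := fun hc => hvA (hc ▸ hA'A a haA')
      exact ⟨a, hA'A a haA', by rw [hpvagree b hbv, hpvagree a hav]; exact hor⟩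

lemma sum_update_sub {S : Finset ℕ} {d : ℕ → ℕ} {w : ℕ} (hw : w ∈ S) (h1 : 1 ≤ d w) :
    ∑ v ∈ S, Function.update d w (d w - 1) v + 1 = ∑ v ∈ S, d v := by
  rw [← Finset.add_sum_erase _ _ hw, ← Finset.add_sum_erase _ d hw]
  have : ∑ v ∈ S.erase w, Function.update d w (d w - 1) v = ∑ v ∈ S.erase w, d v :=
    Finset.sum_congr rfl fun v hv => Function.update_of_ne (Finset.ne_of_mem_erase hv) _ _
  rw [this, Function.update_self]
  omega

lemma sum_update_eq {S : Finset ℕ} {d : ℕ → ℕ} {w : ℕ} (hw : w ∉ S) :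
    ∑ v ∈ S, Function.update d w (d w - 1) v = ∑ v ∈ S, d v :=
  Finset.sum_congr rfl fun v hv =>
    Function.update_of_ne (show v ≠ w from fun hc => hw (hc ▸ hv)) _ _

lemma card_ge_sum {S : Finset ℕ} {d : ℕ → ℕ} (h : ∀ v ∈ S, 1 ≤ d v) :
    S.card ≤ ∑ v ∈ S, d v := by
  calc S.card = ∑ _v ∈ S, 1 := by simp
  _ ≤ ∑ v ∈ S, d v := Finset.sum_le_sum h

lemma good_empty (A D : Finset ℕ) (d : ℕ → ℕ) : Good ∅ A D d := by
  refine ⟨fun _ => none, fun _ => 0, ?_, ?_, ?_, ?_, ?_⟩ <;> simp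

lemma good_mono_D {V A D D₂ : Finset ℕ} {d : ℕ → ℕ} (hsub : D ⊆ D₂) (h : Good V A D d) :
    Good V A D₂ d := by
  obtain ⟨p, ρ, h⟩ := h
  exact ⟨p, ρ, h.mem, h.rk, h.degree, h.indep,
    fun b hb hbA hbD => h.dom b hb hbA (fun hc => hbD (hsub hc))⟩


lemma main_induction (N : ℕ) : ∀ (V A D : Finset ℕ) (d : ℕ → ℕ),
    V.card ≤ N → A ⊆ V → D ⊆ V \ A →
    (∀ v ∈ V, 1 ≤ d v) →
    ((V \ A) \ D).card ≤ ∑ v ∈ A, d v →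
    ∑ v ∈ A, d v ≤ ∑ v ∈ V \ A, d v →
    (∑ v ∈ V \ A, d v = ∑ v ∈ A, d v ∨
      ∑ v ∈ V \ A, d v + 2 ≤ ∑ v ∈ A, d v +
        2 * ((V \ A).filter (fun v => 2 ≤ d v ∨ v ∈ D)).card) →
    (V = ∅ ∨ ∑ v ∈ V, d v + 2 ≤ 2 * V.card) →
    Even (∑ v ∈ V, d v) →
    Good V A D d := by
  induction N with
  | zero =>
    intro V A D d hcard _ _ _ _ _ _ _ _
    have : V = ∅ := Finset.card_eq_zero.1 (Nat.le_zero.1 hcard)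
    subst this
    exact good_empty A D d
  | succ N ih =>
    intro V A D d hcard hAV hDB hpos h1 h2 h3 h4 h5
    rcases V.eq_empty_or_nonempty with rfl | hVne
    · exact good_empty A D d
    have h4' : ∑ v ∈ V, d v + 2 ≤ 2 * V.card := by
      rcases h4 with rfl | h4
      · exact absurd rfl (Finset.nonempty_iff_ne_empty.1 hVne)
      · exact h4
    clear h4
    have hsplit : ∑ v ∈ V \ A, d v + ∑ v ∈ A, d v = ∑ v ∈ V, d v := Finset.sum_sdiff hAV
    obtain ⟨m, hm⟩ := h5
    -- a degree-1 vertex exists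
    have hx1 : ∃ x ∈ V, d x = 1 := by
      by_contra hcon
      push_neg at hcon
      have h2' : ∀ x ∈ V, 2 ≤ d x := fun x hx => by
        have := hpos x hx; have := hcon x hx; omega
      have : 2 * V.card ≤ ∑ v ∈ V, d v := by
        calc 2 * V.card = ∑ _v ∈ V, 2 := by rw [Finset.sum_const, smul_eq_mul, mul_comm]
        _ ≤ ∑ v ∈ V, d v := Finset.sum_le_sum h2'
      omega
    by_cases hC1 : ∃ b1, b1 ∈ (V \ A) \ D ∧ d b1 = 1
    · -- CASE 1 : a needy vertex of degree 1
      obtain ⟨b1, hb1mem, hb1d⟩ := hC1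
      have hb1B : b1 ∈ V \ A := (Finset.mem_sdiff.1 hb1mem).1
      have hb1D : b1 ∉ D := (Finset.mem_sdiff.1 hb1mem).2
      have hb1V : b1 ∈ V := (Finset.mem_sdiff.1 hb1B).1
      have hb1A : b1 ∉ A := (Finset.mem_sdiff.1 hb1B).2
      have hBerase : V.erase b1 \ A = (V \ A).erase b1 := by
        ext u; simp only [mem_sdiff, mem_erase]; tauto
      have hNerase : (V.erase b1 \ A) \ D = ((V \ A) \ D).erase b1 := by
        rw [hBerase]; ext u; simp only [mem_sdiff, mem_erase]; tauto
      have hcardB : 1 ≤ ((V \ A) \ D).card := Finset.card_pos.2 ⟨b1, hb1mem⟩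
      have hsApos : 1 ≤ ∑ v ∈ A, d v := le_trans hcardB h1
      by_cases hC1a : ∃ a1 ∈ A, 2 ≤ d a1
      · -- C1a : attach b1 to a1 ∈ A with d a1 ≥ 2
        obtain ⟨a1, ha1A, ha1d⟩ := hC1a
        have ha1V : a1 ∈ V := hAV ha1A
        have hab : a1 ≠ b1 := fun hc => hb1A (hc ▸ ha1A)
        have ha1B : a1 ∉ V \ A := fun hc => (Finset.mem_sdiff.1 hc).2 ha1A
        -- bridges
        have e1 : ∑ v ∈ A, Function.update d a1 (d a1 - 1) v + 1 = ∑ v ∈ A, d v :=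
          sum_update_sub ha1A (by omega)
        have e2 : ∑ v ∈ (V \ A).erase b1, Function.update d a1 (d a1 - 1) v
            = ∑ v ∈ (V \ A).erase b1, d v :=
          sum_update_eq (fun hc => ha1B (Finset.mem_of_mem_erase hc))
        have e3 : ∑ v ∈ (V \ A).erase b1, d v + d b1 = ∑ v ∈ V \ A, d v :=
          Finset.sum_erase_add _ _ hb1B
        have e4 : ∑ v ∈ V.erase b1, Function.update d a1 (d a1 - 1) v + 1
            = ∑ v ∈ V.erase b1, d v :=
          sum_update_sub (Finset.mem_erase.2 ⟨hab, ha1V⟩) (by omega)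
        have e5 : ∑ v ∈ V.erase b1, d v + d b1 = ∑ v ∈ V, d v :=
          Finset.sum_erase_add _ _ hb1V
        have e6 : (V.erase b1).card + 1 = V.card := Finset.card_erase_add_one hb1V
        have e7 : ((V \ A) \ D).erase b1 = ((V \ A) \ D).erase b1 := rfl
        have e8 : (((V \ A) \ D).erase b1).card + 1 = ((V \ A) \ D).card :=
          Finset.card_erase_add_one hb1mem
        have hZeq : (((V \ A).erase b1).filter
              (fun v => 2 ≤ Function.update d a1 (d a1 - 1) v ∨ v ∈ D))
            = ((V \ A).filter (fun v => 2 ≤ d v ∨ v ∈ D)) := by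
          ext u
          simp only [mem_filter, mem_erase, mem_sdiff]
          constructor
          · rintro ⟨⟨hub, huV, huA⟩, hP⟩
            refine ⟨⟨huV, huA⟩, ?_⟩
            rwa [Function.update_of_ne (show u ≠ a1 from fun hc => huA (hc ▸ ha1A))] at hP
          · rintro ⟨⟨huV, huA⟩, hP⟩
            have hub : u ≠ b1 := by
              rintro rfl
              rcases hP with hP | hP
              · omega
              · exact hb1D hP
            refine ⟨⟨hub, huV, huA⟩, ?_⟩
            rwa [Function.update_of_ne (show u ≠ a1 from fun hc => huA (hc ▸ ha1A))]
        have key : Good (V.erase b1) A D (Function.update d a1 (d a1 - 1)) := by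
          apply ih
          · have := Finset.card_erase_add_one hb1V; omega
          · exact fun a ha => Finset.mem_erase.2 ⟨fun hc => hb1A (hc ▸ ha), hAV ha⟩
          · intro x hx
            rw [hBerase]
            exact Finset.mem_erase.2 ⟨fun hc => hb1D (hc ▸ hx), hDB hx⟩
          · intro v hv
            by_cases hva : v = a1
            · subst hva; rw [Function.update_self]; omega
            · rw [Function.update_of_ne hva]
              exact hpos v (Finset.mem_of_mem_erase hv)
          · rw [hNerase]; omega
          · rw [hBerase]; omega
          · rw [hBerase, hZeq]
            omega
          · right
            omega
          · exact ⟨m - 1, by omega⟩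
        have hres := good_attach_toA key (Finset.notMem_erase b1 V)
          (Finset.mem_erase.2 ⟨hab, ha1V⟩) hb1d (by omega) hb1A ha1A
        rwa [Finset.insert_erase hb1V] at hres
      · -- C1b : all of A has degree 1; pair (a1, b1) as its own component
        push_neg at hC1a
        have hallA : ∀ a ∈ A, d a = 1 := fun a ha => by
          have := hpos a (hAV ha); have := hC1a a ha; omega
        have hAne : A.Nonempty := by
          rcases A.eq_empty_or_nonempty with rfl | h
          · simp at hsApos
          · exact h
        obtain ⟨a1, ha1A⟩ := hAne
        have ha1d : d a1 = 1 := hallA a1 ha1A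
        have ha1V : a1 ∈ V := hAV ha1A
        have hab : a1 ≠ b1 := fun hc => hb1A (hc ▸ ha1A)
        have hsAcard : ∑ v ∈ A, d v = A.card := by
          rw [Finset.sum_congr rfl hallA]; simp
        have hB'eq : ((V.erase b1).erase a1) \ (A.erase a1) = (V \ A).erase b1 := by
          ext u
          simp only [mem_sdiff, mem_erase, not_and]
          constructor
          · rintro ⟨⟨hua, hub, huV⟩, hnA⟩
            exact ⟨hub, huV, fun huA => (hnA hua) huA⟩
          · rintro ⟨hub, huV, huA⟩
            exact ⟨⟨fun hc => huA (hc ▸ ha1A), hub, huV⟩, fun _ hc => huA hc⟩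
        have hN'eq : (((V.erase b1).erase a1) \ (A.erase a1)) \ D
            = ((V \ A) \ D).erase b1 := by
          rw [hB'eq]; ext u; simp only [mem_sdiff, mem_erase]; tauto
        have hZ'eq : (((V \ A).erase b1).filter
              (fun v => 2 ≤ d v ∨ v ∈ D))
            = ((V \ A).filter (fun v => 2 ≤ d v ∨ v ∈ D)) := by
          ext u
          simp only [mem_filter, mem_erase]
          constructor
          · rintro ⟨⟨hub, huB⟩, hP⟩
            exact ⟨huB, hP⟩
          · rintro ⟨huB, hP⟩
            refine ⟨⟨?_, huB⟩, hP⟩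
            rintro rfl
            rcases hP with hP | hP
            · omega
            · exact hb1D hP
        have eA : ∑ v ∈ A.erase a1, d v + 1 = ∑ v ∈ A, d v := by
          have := Finset.sum_erase_add A d ha1A; omega
        have eB : ∑ v ∈ (V \ A).erase b1, d v + 1 = ∑ v ∈ V \ A, d v := by
          have := Finset.sum_erase_add (V \ A) d hb1B; omega
        have ha1Vb : a1 ∈ V.erase b1 := Finset.mem_erase.2 ⟨hab, ha1V⟩
        have esum : ∑ v ∈ (V.erase b1).erase a1, d v + 2 = ∑ v ∈ V, d v := by
          have h1' := Finset.sum_erase_add (V.erase b1) d ha1Vb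
          have h2' := Finset.sum_erase_add V d hb1V
          omega
        have ecard : ((V.erase b1).erase a1).card + 2 = V.card := by
          have h1' := Finset.card_erase_add_one ha1Vb
          have h2' := Finset.card_erase_add_one hb1V
          omega
        have hcVcard := Finset.card_sdiff_add_card_eq_card hAV
        have key : Good ((V.erase b1).erase a1) (A.erase a1) D d := by
          apply ih
          · omega
          · intro a ha
            rcases Finset.mem_erase.1 ha with ⟨hne, haA⟩
            exact Finset.mem_erase.2 ⟨hne, Finset.mem_erase.2
              ⟨fun hc => hb1A (hc ▸ haA), hAV haA⟩⟩
          · intro x hx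
            rw [hB'eq]
            exact Finset.mem_erase.2 ⟨fun hc => hb1D (hc ▸ hx), hDB hx⟩
          · intro v hv
            exact hpos v (Finset.mem_of_mem_erase (Finset.mem_of_mem_erase hv))
          · rw [hN'eq]
            have := Finset.card_erase_add_one hb1mem
            omega
          · rw [hB'eq]; omega
          · rw [hB'eq, hZ'eq]; omega
          · rcases ((V.erase b1).erase a1).eq_empty_or_nonempty with hemp | hne'
            · exact Or.inl hemp
            · right
              have hV'pos : 1 ≤ ((V.erase b1).erase a1).card := Finset.card_pos.2 hne'
              rcases h3 with h3 | h3
              · by_cases hB2 : 2 ≤ (V \ A).card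
                · omega
                · exfalso
                  have hBpos : 1 ≤ (V \ A).card := Finset.card_pos.2 ⟨b1, hb1B⟩
                  have hBcard : (V \ A).card = 1 := by omega
                  obtain ⟨c, hc⟩ := Finset.card_eq_one.1 hBcard
                  have hb1c : b1 = c := by
                    rw [hc] at hb1B; exact Finset.mem_singleton.1 hb1B
                  have hsB : ∑ v ∈ V \ A, d v = 1 := by
                    rw [hc, Finset.sum_singleton, ← hb1c, hb1d]
                  omega
              · have hsubZ : ((V \ A).filter (fun v => 2 ≤ d v ∨ v ∈ D))
                    ⊆ (V \ A).erase b1 := by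
                  intro u hu
                  rcases Finset.mem_filter.1 hu with ⟨huB, hP⟩
                  refine Finset.mem_erase.2 ⟨?_, huB⟩
                  rintro rfl
                  rcases hP with hP | hP
                  · omega
                  · exact hb1D hP
                have hZle := Finset.card_le_card hsubZ
                have := Finset.card_erase_add_one hb1B
                omega
          · exact ⟨m - 1, by omega⟩
        have hres := good_pair (A := A) (D := D) key
          (fun hc => Finset.notMem_erase b1 V (Finset.mem_of_mem_erase hc))
          (Finset.notMem_erase a1 _) (Ne.symm hab) hb1d ha1d
          (fun a => by
            constructor
            · intro ha
              by_cases hc : a = a1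
              · exact Or.inr ⟨hc, ha1A⟩
              · exact Or.inl (Finset.mem_erase.2 ⟨hc, ha⟩)
            · rintro (ha | ⟨rfl, _⟩)
              · exact Finset.mem_of_mem_erase ha
              · exact ha1A)
          Finset.Subset.rfl hb1A (Or.inr ha1A) (Or.inl ha1A)
        rwa [Finset.insert_erase ha1Vb, Finset.insert_erase hb1V] at hres
    · -- no needy degree-1 vertex
      by_cases hC2 : ∃ b1 ∈ D, d b1 = 1
      · -- CASE 2 : an exempt (dominated) vertex of degree 1
        obtain ⟨b1, hb1D, hb1d⟩ := hC2
        have hb1B : b1 ∈ V \ A := hDB hb1D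
        have hb1V : b1 ∈ V := (Finset.mem_sdiff.1 hb1B).1
        have hb1A : b1 ∉ A := (Finset.mem_sdiff.1 hb1B).2
        have hBerase : V.erase b1 \ A = (V \ A).erase b1 := by
          ext u; simp only [mem_sdiff, mem_erase]; tauto
        have hDcard : 1 ≤ D.card := Finset.card_pos.2 ⟨b1, hb1D⟩
        have hBDcard : ((V \ A) \ D).card + D.card = (V \ A).card :=
          Finset.card_sdiff_add_card_eq_card hDB
        have hBlecard : (V \ A).card ≤ ∑ v ∈ V \ A, d v :=
          card_ge_sum (fun v hv => hpos v (Finset.mem_sdiff.1 hv).1)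
        have hNerase2 : (V.erase b1 \ A) \ (D.erase b1) = (V \ A) \ D := by
          rw [hBerase]
          ext u
          simp only [mem_sdiff, mem_erase, not_and]
          constructor
          · rintro ⟨⟨hub, huV, huA⟩, hnD⟩
            exact ⟨⟨huV, huA⟩, fun hc => (hnD hub) hc⟩
          · rintro ⟨⟨huV, huA⟩, huD⟩
            exact ⟨⟨fun hc => huD (hc ▸ hb1D), huV, huA⟩, fun _ hc => huD hc⟩
        have e3 : ∑ v ∈ (V \ A).erase b1, d v + 1 = ∑ v ∈ V \ A, d v := by
          have := Finset.sum_erase_add (V \ A) d hb1B; omega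
        have e5 : ∑ v ∈ V.erase b1, d v + 1 = ∑ v ∈ V, d v := by
          have := Finset.sum_erase_add V d hb1V; omega
        have e6 : (V.erase b1).card + 1 = V.card := Finset.card_erase_add_one hb1V
        by_cases hs0 : ∑ v ∈ V \ A, d v = ∑ v ∈ A, d v
        · -- C2-0 : equal sums
          have hkey : ((V \ A) \ D).card + 1 ≤ ∑ v ∈ A, d v := by omega
          by_cases hA2 : ∃ a1 ∈ A, 2 ≤ d a1
          · -- C2-0a : attach b1 to a1
            obtain ⟨a1, ha1A, ha1d⟩ := hA2
            have ha1V : a1 ∈ V := hAV ha1A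
            have hab : a1 ≠ b1 := fun hc => hb1A (hc ▸ ha1A)
            have ha1B : a1 ∉ V \ A := fun hc => (Finset.mem_sdiff.1 hc).2 ha1A
            have e1 : ∑ v ∈ A, Function.update d a1 (d a1 - 1) v + 1 = ∑ v ∈ A, d v :=
              sum_update_sub ha1A (by omega)
            have e2 : ∑ v ∈ (V \ A).erase b1, Function.update d a1 (d a1 - 1) v
                = ∑ v ∈ (V \ A).erase b1, d v :=
              sum_update_eq (fun hc => ha1B (Finset.mem_of_mem_erase hc))
            have e4 : ∑ v ∈ V.erase b1, Function.update d a1 (d a1 - 1) v + 1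
                = ∑ v ∈ V.erase b1, d v :=
              sum_update_sub (Finset.mem_erase.2 ⟨hab, ha1V⟩) (by omega)
            have key : Good (V.erase b1) A (D.erase b1)
                (Function.update d a1 (d a1 - 1)) := by
              apply ih
              · omega
              · exact fun a ha => Finset.mem_erase.2 ⟨fun hc => hb1A (hc ▸ ha), hAV ha⟩
              · intro x hx
                rw [hBerase]
                exact Finset.mem_erase.2 ⟨Finset.ne_of_mem_erase hx,
                  hDB (Finset.mem_of_mem_erase hx)⟩
              · intro v hv
                by_cases hva : v = a1
                · subst hva; rw [Function.update_self]; omega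
                · rw [Function.update_of_ne hva]
                  exact hpos v (Finset.mem_of_mem_erase hv)
              · rw [hNerase2]; omega
              · rw [hBerase]; omega
              · left; rw [hBerase]; omega
              · right; omega
              · exact ⟨m - 1, by omega⟩
            have hres := good_attach_toA key (Finset.notMem_erase b1 V)
              (Finset.mem_erase.2 ⟨hab, ha1V⟩) hb1d (by omega) hb1A ha1A
            rw [Finset.insert_erase hb1V] at hres
            exact good_mono_D (Finset.erase_subset _ _) hres
          · -- C2-0b : all of A degree 1; pair (a1, b1)
            push_neg at hA2
            have hallA : ∀ a ∈ A, d a = 1 := fun a ha => by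
              have := hpos a (hAV ha); have := hA2 a ha; omega
            have hsApos : 1 ≤ ∑ v ∈ A, d v := by omega
            have hAne : A.Nonempty := by
              rcases A.eq_empty_or_nonempty with rfl | h
              · simp at hsApos
              · exact h
            obtain ⟨a1, ha1A⟩ := hAne
            have ha1d : d a1 = 1 := hallA a1 ha1A
            have ha1V : a1 ∈ V := hAV ha1A
            have hab : a1 ≠ b1 := fun hc => hb1A (hc ▸ ha1A)
            have hsAcard : ∑ v ∈ A, d v = A.card := by
              rw [Finset.sum_congr rfl hallA]; simp
            have hB'eq : ((V.erase b1).erase a1) \ (A.erase a1) = (V \ A).erase b1 := by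
              ext u
              simp only [mem_sdiff, mem_erase, not_and]
              constructor
              · rintro ⟨⟨hua, hub, huV⟩, hnA⟩
                exact ⟨hub, huV, fun huA => (hnA hua) huA⟩
              · rintro ⟨hub, huV, huA⟩
                exact ⟨⟨fun hc => huA (hc ▸ ha1A), hub, huV⟩, fun _ hc => huA hc⟩
            have hN'eq : ((((V.erase b1).erase a1) \ (A.erase a1)) \ (D.erase b1))
                = (V \ A) \ D := by
              rw [hB'eq]
              ext u
              simp only [mem_sdiff, mem_erase, not_and]
              constructor
              · rintro ⟨⟨hub, huV, huA⟩, hnD⟩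
                exact ⟨⟨huV, huA⟩, fun hc => (hnD hub) hc⟩
              · rintro ⟨⟨huV, huA⟩, huD⟩
                exact ⟨⟨fun hc => huD (hc ▸ hb1D), huV, huA⟩, fun _ hc => huD hc⟩
            have eA : ∑ v ∈ A.erase a1, d v + 1 = ∑ v ∈ A, d v := by
              have := Finset.sum_erase_add A d ha1A; omega
            have ha1Vb : a1 ∈ V.erase b1 := Finset.mem_erase.2 ⟨hab, ha1V⟩
            have esum : ∑ v ∈ (V.erase b1).erase a1, d v + 2 = ∑ v ∈ V, d v := by
              have h1' := Finset.sum_erase_add (V.erase b1) d ha1Vb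
              omega
            have ecard : ((V.erase b1).erase a1).card + 2 = V.card := by
              have h1' := Finset.card_erase_add_one ha1Vb
              omega
            have hcVcard := Finset.card_sdiff_add_card_eq_card hAV
            have key : Good ((V.erase b1).erase a1) (A.erase a1) (D.erase b1) d := by
              apply ih
              · omega
              · intro a ha
                rcases Finset.mem_erase.1 ha with ⟨hne, haA⟩
                exact Finset.mem_erase.2 ⟨hne, Finset.mem_erase.2
                  ⟨fun hc => hb1A (hc ▸ haA), hAV haA⟩⟩
              · intro x hx
                rw [hB'eq]
                exact Finset.mem_erase.2 ⟨Finset.ne_of_mem_erase hx,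
                  hDB (Finset.mem_of_mem_erase hx)⟩
              · intro v hv
                exact hpos v (Finset.mem_of_mem_erase (Finset.mem_of_mem_erase hv))
              · rw [hN'eq]; omega
              · rw [hB'eq]; omega
              · left; rw [hB'eq]; omega
              · rcases ((V.erase b1).erase a1).eq_empty_or_nonempty with hemp | hne'
                · exact Or.inl hemp
                · right
                  have hV'pos : 1 ≤ ((V.erase b1).erase a1).card := Finset.card_pos.2 hne'
                  by_cases hB2 : 2 ≤ (V \ A).card
                  · omega
                  · exfalso
                    have hBpos : 1 ≤ (V \ A).card := Finset.card_pos.2 ⟨b1, hb1B⟩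
                    have hBcard : (V \ A).card = 1 := by omega
                    obtain ⟨c, hc⟩ := Finset.card_eq_one.1 hBcard
                    have hb1c : b1 = c := by
                      rw [hc] at hb1B; exact Finset.mem_singleton.1 hb1B
                    have hsB : ∑ v ∈ V \ A, d v = 1 := by
                      rw [hc, Finset.sum_singleton, ← hb1c, hb1d]
                    omega
              · exact ⟨m - 1, by omega⟩
            have hres := good_pair (A := A) (D := D) key
              (fun hc => Finset.notMem_erase b1 V (Finset.mem_of_mem_erase hc))
              (Finset.notMem_erase a1 _) (Ne.symm hab) hb1d ha1d
              (fun a => by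
                constructor
                · intro ha
                  by_cases hc : a = a1
                  · exact Or.inr ⟨hc, ha1A⟩
                  · exact Or.inl (Finset.mem_erase.2 ⟨hc, ha⟩)
                · rintro (ha | ⟨rfl, _⟩)
                  · exact Finset.mem_of_mem_erase ha
                  · exact ha1A)
              (Finset.erase_subset _ _) hb1A (Or.inl hb1D) (Or.inl ha1A)
            rwa [Finset.insert_erase ha1Vb, Finset.insert_erase hb1V] at hres
        · -- C2-1 : strict surplus
          have hs2 : ∑ v ∈ A, d v + 2 ≤ ∑ v ∈ V \ A, d v := by omega
          have h3r : ∑ v ∈ V \ A, d v + 2 ≤ ∑ v ∈ A, d v +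
              2 * ((V \ A).filter (fun v => 2 ≤ d v ∨ v ∈ D)).card := by
            rcases h3 with h3 | h3
            · omega
            · exact h3
          have hZb1 : b1 ∈ (V \ A).filter (fun v => 2 ≤ d v ∨ v ∈ D) :=
            Finset.mem_filter.2 ⟨hb1B, Or.inr hb1D⟩
          have hZcard : (((V \ A).filter (fun v => 2 ≤ d v ∨ v ∈ D)).erase b1).card + 1
              = ((V \ A).filter (fun v => 2 ≤ d v ∨ v ∈ D)).card :=
            Finset.card_erase_add_one hZb1
          by_cases hwgood : ∃ w ∈ V \ A, 3 ≤ d w ∨ (d w = 2 ∧ w ∈ D)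
          · -- C2-1ab : attach b1 to w keeping Z-drop 1
            obtain ⟨w, hwB, hwg⟩ := hwgood
            have hwV : w ∈ V := (Finset.mem_sdiff.1 hwB).1
            have hwA : w ∉ A := (Finset.mem_sdiff.1 hwB).2
            have hw2 : 2 ≤ d w := by rcases hwg with h | ⟨h, _⟩ <;> omega
            have hwb1 : w ≠ b1 := fun hc => by rw [hc, hb1d] at hw2; omega
            have hwBe : w ∈ (V \ A).erase b1 := Finset.mem_erase.2 ⟨hwb1, hwB⟩
            have e1 : ∑ v ∈ A, Function.update d w (d w - 1) v = ∑ v ∈ A, d v :=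
              sum_update_eq (fun hc => hwA hc)
            have e2 : ∑ v ∈ (V \ A).erase b1, Function.update d w (d w - 1) v + 1
                = ∑ v ∈ (V \ A).erase b1, d v :=
              sum_update_sub hwBe (by omega)
            have e4 : ∑ v ∈ V.erase b1, Function.update d w (d w - 1) v + 1
                = ∑ v ∈ V.erase b1, d v :=
              sum_update_sub (Finset.mem_erase.2 ⟨hwb1, hwV⟩) (by omega)
            have hZ'eq : (((V \ A).erase b1).filter
                  (fun v => 2 ≤ Function.update d w (d w - 1) v ∨ v ∈ D.erase b1))
                = ((V \ A).filter (fun v => 2 ≤ d v ∨ v ∈ D)).erase b1 := by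
              ext u
              simp only [mem_filter, mem_erase]
              constructor
              · rintro ⟨⟨hub, huB⟩, hP⟩
                refine ⟨hub, huB, ?_⟩
                by_cases huw : u = w
                · subst huw
                  rcases hwg with h | ⟨h, hD'⟩
                  · exact Or.inl (by omega)
                  · exact Or.inr hD'
                · rw [Function.update_of_ne huw] at hP
                  rcases hP with hP | hP
                  · exact Or.inl hP
                  · exact Or.inr hP.2
              · rintro ⟨hub, huB, hP⟩
                refine ⟨⟨hub, huB⟩, ?_⟩
                by_cases huw : u = w
                · subst huw
                  rw [Function.update_self]
                  rcases hwg with h | ⟨h, hD'⟩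
                  · exact Or.inl (by omega)
                  · exact Or.inr ⟨hub, hD'⟩
                · rw [Function.update_of_ne huw]
                  rcases hP with hP | hP
                  · exact Or.inl hP
                  · exact Or.inr ⟨hub, hP⟩
            have key : Good (V.erase b1) A (D.erase b1)
                (Function.update d w (d w - 1)) := by
              apply ih
              · omega
              · exact fun a ha => Finset.mem_erase.2 ⟨fun hc => hb1A (hc ▸ ha), hAV ha⟩
              · intro x hx
                rw [hBerase]
                exact Finset.mem_erase.2 ⟨Finset.ne_of_mem_erase hx,
                  hDB (Finset.mem_of_mem_erase hx)⟩
              · intro v hv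
                by_cases hvw : v = w
                · subst hvw; rw [Function.update_self]; omega
                · rw [Function.update_of_ne hvw]
                  exact hpos v (Finset.mem_of_mem_erase hv)
              · rw [hNerase2]; omega
              · rw [hBerase]; omega
              · rw [hBerase, hZ'eq]; omega
              · right; omega
              · exact ⟨m - 1, by omega⟩
            have hres := good_attach_exempt key (Finset.notMem_erase b1 V)
              (Finset.mem_erase.2 ⟨hwb1, hwV⟩) hb1d (by omega) hb1A
            rwa [Finset.insert_erase hb1V, Finset.insert_erase hb1D] at hres
          · -- C2-1cd : every B-vertex has degree ≤ 2, D-vertices degree 1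
            push_neg at hwgood
            have hD1 : ∀ x ∈ D, d x = 1 := by
              intro x hx
              have hxB := hDB hx
              have h1x := hpos x (Finset.mem_sdiff.1 hxB).1
              rcases hwgood x hxB with ⟨hlt, himp⟩
              by_cases h2x : d x = 2
              · exact absurd hx (himp h2x)
              · omega
            have hN2 : ∀ u ∈ (V \ A) \ D, d u = 2 := by
              intro u hu
              have huB := (Finset.mem_sdiff.1 hu).1
              have h1u := hpos u (Finset.mem_sdiff.1 huB).1
              rcases hwgood u huB with ⟨hlt, _⟩
              have hne1 : d u ≠ 1 := fun hc => hC1 ⟨u, hu, hc⟩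
              omega
            have hsD : ∑ v ∈ D, d v = D.card := by
              rw [Finset.sum_congr rfl hD1]; simp
            have hsB_split : ∑ v ∈ (V \ A) \ D, d v + ∑ v ∈ D, d v = ∑ v ∈ V \ A, d v :=
              Finset.sum_sdiff hDB
            have hZall : ((V \ A).filter (fun v => 2 ≤ d v ∨ v ∈ D)) = V \ A := by
              apply Finset.filter_true_of_mem
              intro u hu
              by_cases huD : u ∈ D
              · exact Or.inr huD
              · exact Or.inl (by have := hN2 u (Finset.mem_sdiff.2 ⟨hu, huD⟩); omega)
            have hZcardall : ((V \ A).filter (fun v => 2 ≤ d v ∨ v ∈ D)).card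
                = (V \ A).card := by rw [hZall]
            by_cases hNe : ((V \ A) \ D).Nonempty
            · -- C2-1c : attach b1 to a needy degree-2 vertex w
              obtain ⟨w, hwN⟩ := hNe
              have hsN : ∑ v ∈ (V \ A) \ D, d v = 2 * ((V \ A) \ D).card := by
                rw [Finset.sum_congr rfl hN2, Finset.sum_const, smul_eq_mul, Nat.mul_comm]
              have hwB := (Finset.mem_sdiff.1 hwN).1
              have hwD : w ∉ D := (Finset.mem_sdiff.1 hwN).2
              have hwd : d w = 2 := hN2 w hwN
              have hwV : w ∈ V := (Finset.mem_sdiff.1 hwB).1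
              have hwA : w ∉ A := (Finset.mem_sdiff.1 hwB).2
              have hwb1 : w ≠ b1 := fun hc => hwD (hc ▸ hb1D)
              have hwBe : w ∈ (V \ A).erase b1 := Finset.mem_erase.2 ⟨hwb1, hwB⟩
              have e1 : ∑ v ∈ A, Function.update d w (d w - 1) v = ∑ v ∈ A, d v :=
                sum_update_eq (fun hc => hwA hc)
              have e2 : ∑ v ∈ (V \ A).erase b1, Function.update d w (d w - 1) v + 1
                  = ∑ v ∈ (V \ A).erase b1, d v :=
                sum_update_sub hwBe (by omega)
              have e4 : ∑ v ∈ V.erase b1, Function.update d w (d w - 1) v + 1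
                  = ∑ v ∈ V.erase b1, d v :=
                sum_update_sub (Finset.mem_erase.2 ⟨hwb1, hwV⟩) (by omega)
              have hZ'eq : (((V \ A).erase b1).filter
                    (fun v => 2 ≤ Function.update d w (d w - 1) v ∨ v ∈ D.erase b1))
                  = ((((V \ A).filter (fun v => 2 ≤ d v ∨ v ∈ D)).erase b1).erase w) := by
                ext u
                simp only [mem_filter, mem_erase]
                constructor
                · rintro ⟨⟨hub, huB⟩, hP⟩
                  have huw : u ≠ w := by
                    rintro rfl
                    rcases hP with hP | hP
                    · rw [Function.update_self] at hP; omega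
                    · exact hwD hP.2
                  rw [Function.update_of_ne huw] at hP
                  refine ⟨huw, hub, huB, ?_⟩
                  rcases hP with hP | hP
                  · exact Or.inl hP
                  · exact Or.inr hP.2
                · rintro ⟨huw, hub, huB, hP⟩
                  refine ⟨⟨hub, huB⟩, ?_⟩
                  rw [Function.update_of_ne huw]
                  rcases hP with hP | hP
                  · exact Or.inl hP
                  · exact Or.inr ⟨hub, hP⟩
              have hZw : w ∈ ((V \ A).filter (fun v => 2 ≤ d v ∨ v ∈ D)).erase b1 :=
                Finset.mem_erase.2 ⟨hwb1, Finset.mem_filter.2 ⟨hwB, Or.inl (by omega)⟩⟩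
              have hZcard2 := Finset.card_erase_add_one hZw
              have key : Good (V.erase b1) A (D.erase b1)
                  (Function.update d w (d w - 1)) := by
                apply ih
                · omega
                · exact fun a ha => Finset.mem_erase.2 ⟨fun hc => hb1A (hc ▸ ha), hAV ha⟩
                · intro x hx
                  rw [hBerase]
                  exact Finset.mem_erase.2 ⟨Finset.ne_of_mem_erase hx,
                    hDB (Finset.mem_of_mem_erase hx)⟩
                · intro v hv
                  by_cases hvw : v = w
                  · subst hvw; rw [Function.update_self]; omega
                  · rw [Function.update_of_ne hvw]
                    exact hpos v (Finset.mem_of_mem_erase hv)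
                · rw [hNerase2]; omega
                · rw [hBerase]; omega
                · rw [hBerase, hZ'eq]; omega
                · right; omega
                · exact ⟨m - 1, by omega⟩
              have hres := good_attach_exempt key (Finset.notMem_erase b1 V)
                (Finset.mem_erase.2 ⟨hwb1, hwV⟩) hb1d (by omega) hb1A
              rwa [Finset.insert_erase hb1V, Finset.insert_erase hb1D] at hres
            · -- C2-1d : pair two exempt degree-1 vertices b1, b2
              have hNempty : (V \ A) \ D = ∅ := Finset.not_nonempty_iff_eq_empty.1 hNe
              have hDeq : D = V \ A :=
                Finset.Subset.antisymm hDB (Finset.sdiff_eq_empty_iff_subset.1 hNempty)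
              have hB1all : ∀ u ∈ V \ A, d u = 1 := fun u hu => hD1 u (hDeq ▸ hu)
              have hsBcard : ∑ v ∈ V \ A, d v = (V \ A).card := by
                rw [Finset.sum_congr rfl hB1all]; simp
              have hcVcard := Finset.card_sdiff_add_card_eq_card hAV
              have hD2 : 1 < D.card := by
                have : D.card = (V \ A).card := by rw [hDeq]
                omega
              obtain ⟨b2, hb2D, hb2ne⟩ := Finset.exists_mem_ne hD2 b1
              have hb2B : b2 ∈ V \ A := hDB hb2D
              have hb2V : b2 ∈ V := (Finset.mem_sdiff.1 hb2B).1
              have hb2A : b2 ∉ A := (Finset.mem_sdiff.1 hb2B).2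
              have hb2d : d b2 = 1 := hD1 b2 hb2D
              have hb2Vb : b2 ∈ V.erase b1 := Finset.mem_erase.2 ⟨hb2ne, hb2V⟩
              have hb2Be : b2 ∈ (V \ A).erase b1 := Finset.mem_erase.2 ⟨hb2ne, hb2B⟩
              have hB2eq : ((V.erase b1).erase b2) \ A = ((V \ A).erase b1).erase b2 := by
                ext u; simp only [mem_sdiff, mem_erase]; tauto
              have esum : ∑ v ∈ (V.erase b1).erase b2, d v + 2 = ∑ v ∈ V, d v := by
                have h1' := Finset.sum_erase_add (V.erase b1) d hb2Vb
                omega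
              have ecard : ((V.erase b1).erase b2).card + 2 = V.card := by
                have h1' := Finset.card_erase_add_one hb2Vb
                omega
              have eB2 : ∑ v ∈ ((V \ A).erase b1).erase b2, d v + 2 = ∑ v ∈ V \ A, d v := by
                have h1' := Finset.sum_erase_add ((V \ A).erase b1) d hb2Be
                omega
              have ecardB : (((V \ A).erase b1).erase b2).card + 2 = (V \ A).card := by
                have h1' := Finset.card_erase_add_one hb2Be
                have h2' := Finset.card_erase_add_one hb1B
                omega
              have hZ'eq2 : ((((V \ A).erase b1).erase b2).filter
                    (fun v => 2 ≤ d v ∨ v ∈ (D.erase b1).erase b2))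
                  = ((V \ A).erase b1).erase b2 := by
                apply Finset.filter_true_of_mem
                intro u hu
                rcases Finset.mem_erase.1 hu with ⟨hub2, hu'⟩
                rcases Finset.mem_erase.1 hu' with ⟨hub1, huB⟩
                exact Or.inr (Finset.mem_erase.2 ⟨hub2, Finset.mem_erase.2
                  ⟨hub1, hDeq ▸ huB⟩⟩)
              have hN'empty : ((((V.erase b1).erase b2) \ A) \ ((D.erase b1).erase b2)) = ∅ := by
                rw [hB2eq, hDeq]
                exact Finset.sdiff_self _
              have key : Good ((V.erase b1).erase b2) A ((D.erase b1).erase b2) d := by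
                apply ih
                · omega
                · intro a ha
                  exact Finset.mem_erase.2 ⟨fun hc => hb2A (hc ▸ ha),
                    Finset.mem_erase.2 ⟨fun hc => hb1A (hc ▸ ha), hAV ha⟩⟩
                · intro x hx
                  rw [hB2eq]
                  rcases Finset.mem_erase.1 hx with ⟨hxb2, hx'⟩
                  rcases Finset.mem_erase.1 hx' with ⟨hxb1, hxD⟩
                  exact Finset.mem_erase.2 ⟨hxb2, Finset.mem_erase.2 ⟨hxb1, hDB hxD⟩⟩
                · intro v hv
                  exact hpos v (Finset.mem_of_mem_erase (Finset.mem_of_mem_erase hv))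
                · rw [hN'empty]; simp
                · rw [hB2eq]; omega
                · rw [hB2eq, hZ'eq2]; omega
                · rcases ((V.erase b1).erase b2).eq_empty_or_nonempty with hemp | hne'
                  · exact Or.inl hemp
                  · right
                    have hV'pos : 1 ≤ ((V.erase b1).erase b2).card := Finset.card_pos.2 hne'
                    rcases A.eq_empty_or_nonempty with rfl | hAne
                    · have hsA0 : ∑ v ∈ (∅ : Finset ℕ), d v = 0 := Finset.sum_empty
                      have hcA0 : (∅ : Finset ℕ).card = 0 := rfl
                      omega
                    · have hApos := Finset.card_pos.2 hAne
                      omega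
                · exact ⟨m - 1, by omega⟩
              have hres := good_pair (A := A) (D := D) key
                (fun hc => Finset.notMem_erase b1 V (Finset.mem_of_mem_erase hc))
                (Finset.notMem_erase b2 _) (Ne.symm hb2ne) hb1d hb2d
                (fun a => by
                  constructor
                  · intro ha; exact Or.inl ha
                  · rintro (ha | ⟨rfl, hin⟩)
                    · exact ha
                    · exact hin)
                ((Finset.erase_subset _ _).trans (Finset.erase_subset _ _))
                hb1A (Or.inl hb1D) (Or.inr hb2D)
              rwa [Finset.insert_erase hb2Vb, Finset.insert_erase hb1V] at hres
      · -- CASE 3 : all of B has degree ≥ 2; a degree-1 vertex of A attaches into B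
        push_neg at hC2
        have hB2 : ∀ b ∈ V \ A, 2 ≤ d b := by
          intro b hb
          have hb1 := hpos b (Finset.mem_sdiff.1 hb).1
          by_cases hbD : b ∈ D
          · have := hC2 b hbD; omega
          · by_contra hcon
            exact hC1 ⟨b, Finset.mem_sdiff.2 ⟨hb, hbD⟩, by omega⟩
        obtain ⟨a1, ha1V, ha1d⟩ := hx1
        have ha1A : a1 ∈ A := by
          by_contra h
          have := hB2 a1 (Finset.mem_sdiff.2 ⟨ha1V, h⟩)
          omega
        have hsA1 : 1 ≤ ∑ v ∈ A, d v := by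
          have := Finset.single_le_sum (f := d) (fun i _ => Nat.zero_le _) ha1A
          omega
        have hBne : (V \ A).Nonempty := by
          rcases (V \ A).eq_empty_or_nonempty with hemp | h
          · exfalso
            rw [hemp, Finset.sum_empty] at h2
            omega
          · exact h
        obtain ⟨w, hwB, hwties⟩ : ∃ w ∈ V \ A, (((V \ A) \ D).Nonempty → w ∈ (V \ A) \ D) := by
          rcases ((V \ A) \ D).eq_empty_or_nonempty with hne | hne
          · obtain ⟨w, hw⟩ := hBne
            exact ⟨w, hw, fun h => by rw [hne] at h; exact absurd h Finset.not_nonempty_empty⟩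
          · obtain ⟨w, hw⟩ := hne
            exact ⟨w, (Finset.mem_sdiff.1 hw).1, fun _ => hw⟩
        have hwV : w ∈ V := (Finset.mem_sdiff.1 hwB).1
        have hwA : w ∉ A := (Finset.mem_sdiff.1 hwB).2
        have hw2 : 2 ≤ d w := hB2 w hwB
        have hwa1 : w ≠ a1 := fun hc => hwA (hc ▸ ha1A)
        have hB'eq : V.erase a1 \ A.erase a1 = V \ A := by
          ext u
          simp only [mem_sdiff, mem_erase, not_and]
          constructor
          · rintro ⟨⟨hua, huV⟩, hnA⟩
            exact ⟨huV, fun huA => (hnA hua) huA⟩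
          · rintro ⟨huV, huA⟩
            exact ⟨⟨fun hc => huA (hc ▸ ha1A), huV⟩, fun _ hc => huA hc⟩
        have e1 : ∑ v ∈ A.erase a1, Function.update d w (d w - 1) v
            = ∑ v ∈ A.erase a1, d v :=
          sum_update_eq (fun hc => hwA (Finset.mem_of_mem_erase hc))
        have e1b : ∑ v ∈ A.erase a1, d v + 1 = ∑ v ∈ A, d v := by
          have := Finset.sum_erase_add A d ha1A; omega
        have e2 : ∑ v ∈ V \ A, Function.update d w (d w - 1) v + 1 = ∑ v ∈ V \ A, d v :=
          sum_update_sub hwB (by omega)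
        have e4 : ∑ v ∈ V.erase a1, Function.update d w (d w - 1) v + 1
            = ∑ v ∈ V.erase a1, d v :=
          sum_update_sub (Finset.mem_erase.2 ⟨hwa1, hwV⟩) (by omega)
        have e5 : ∑ v ∈ V.erase a1, d v + 1 = ∑ v ∈ V, d v := by
          have := Finset.sum_erase_add V d ha1V; omega
        have e6 : (V.erase a1).card + 1 = V.card := Finset.card_erase_add_one ha1V
        have hNeq : ((V.erase a1 \ A.erase a1) \ (insert w D)) = ((V \ A) \ D).erase w := by
          rw [hB'eq]
          ext u
          simp only [mem_sdiff, mem_erase, Finset.mem_insert, not_or]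
          tauto
        have hNbound : (((V \ A) \ D).erase w).card + 1 ≤ ∑ v ∈ A, d v := by
          rcases ((V \ A) \ D).eq_empty_or_nonempty with hemp | hne
          · rw [hemp]
            simp only [Finset.erase_empty, Finset.card_empty]
            omega
          · have hwN := hwties hne
            have := Finset.card_erase_add_one hwN
            omega
        have hZ'eq : ((V \ A).filter
              (fun v => 2 ≤ Function.update d w (d w - 1) v ∨ v ∈ insert w D))
            = ((V \ A).filter (fun v => 2 ≤ d v ∨ v ∈ D)) := by
          ext u
          simp only [mem_filter, Finset.mem_insert]
          constructor
          · rintro ⟨huB, hP⟩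
            refine ⟨huB, ?_⟩
            by_cases huw : u = w
            · exact Or.inl (by rw [huw]; exact hw2)
            · rw [Function.update_of_ne huw] at hP
              rcases hP with hP | hP | hP
              · exact Or.inl hP
              · exact absurd hP huw
              · exact Or.inr hP
          · rintro ⟨huB, hP⟩
            refine ⟨huB, ?_⟩
            by_cases huw : u = w
            · exact Or.inr (Or.inl huw)
            · rw [Function.update_of_ne huw]
              rcases hP with hP | hP
              · exact Or.inl hP
              · exact Or.inr (Or.inr hP)
        have key : Good (V.erase a1) (A.erase a1) (insert w D)
            (Function.update d w (d w - 1)) := by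
          apply ih
          · omega
          · intro a ha
            rcases Finset.mem_erase.1 ha with ⟨hne, haA⟩
            exact Finset.mem_erase.2 ⟨hne, hAV haA⟩
          · intro x hx
            rw [hB'eq]
            rcases Finset.mem_insert.1 hx with rfl | hxD
            · exact hwB
            · exact hDB hxD
          · intro v hv
            by_cases hvw : v = w
            · subst hvw; rw [Function.update_self]; omega
            · rw [Function.update_of_ne hvw]
              exact hpos v (Finset.mem_of_mem_erase hv)
          · rw [hNeq]; omega
          · rw [hB'eq]; omega
          · rw [hB'eq, hZ'eq]
            rcases h3 with h3 | h3
            · left; omega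
            · right; omega
          · right; omega
          · exact ⟨m - 1, by omega⟩
        have hres := good_attach_fromA key (Finset.notMem_erase a1 V)
          (Finset.mem_erase.2 ⟨hwa1, hwV⟩) ha1d (by omega)
          (Finset.notMem_erase a1 A) (fun hc => hwA (Finset.mem_of_mem_erase hc))
        rwa [Finset.insert_erase ha1V, Finset.insert_erase ha1A] at hres


theorem stmt11 {n : ℕ} (d : Fin n → ℕ) (hd : Antitone d) (hpos : ∀ i, 1 ≤ d i)
    (heven : Even (∑ i, d i)) (hsum : ∑ i, d i ≤ 2 * n - 2)
    (k : ℕ) (hk1 : 1 ≤ k) (hkn : k ≤ n)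
    (h1 : n - k ≤ psum d k) (h2 : psum d k ≤ ssum d k)
    (h3 : ssum d k - psum d k ≤ 2 * (nGe2 d - k) - 2) :
    ∃ F : SimpleGraph (Fin n), IsForestReal d F ∧
      IndepSet F {i | (i : ℕ) < k} ∧ DomSet F {i | (i : ℕ) < k} := by
  classical
  set dd : ℕ → ℕ := fun m => if h : m < n then d ⟨m, h⟩ else 1 with hdd
  have hddval : ∀ i : Fin n, dd (i : ℕ) = d i := fun i => by
    simp only [hdd]; rw [dif_pos i.isLt]
  -- sum transfers
  have hrange : ∀ f : ℕ → ℕ, (∀ i : Fin n, f ↑i = dd ↑i) → True := fun _ _ => trivial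
  have hfiltk : (Finset.range n).filter (fun m => m < k) = Finset.range k := by
    ext m; simp only [mem_filter, mem_range]; omega
  have hfiltk' : (Finset.range n).filter (fun m => k ≤ m) = Finset.range n \ Finset.range k := by
    ext m; simp only [mem_filter, mem_range, mem_sdiff]; omega
  have hpsum : psum d k = ∑ m ∈ Finset.range k, dd m := by
    rw [psum]
    have : ∀ i : Fin n, (if (i : ℕ) < k then d i else 0)
        = (fun m => if m < k then dd m else 0) (i : ℕ) := by
      intro i; simp only [hddval]
    rw [Finset.sum_congr rfl (fun i _ => this i)]
    rw [Fin.sum_univ_eq_sum_range (fun m => if m < k then dd m else 0) n]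
    rw [← Finset.sum_filter, hfiltk]
  have hssum : ssum d k = ∑ m ∈ Finset.range n \ Finset.range k, dd m := by
    rw [ssum]
    have : ∀ i : Fin n, (if k ≤ (i : ℕ) then d i else 0)
        = (fun m => if k ≤ m then dd m else 0) (i : ℕ) := by
      intro i; simp only [hddval]
    rw [Finset.sum_congr rfl (fun i _ => this i)]
    rw [Fin.sum_univ_eq_sum_range (fun m => if k ≤ m then dd m else 0) n]
    rw [← Finset.sum_filter, hfiltk']
  have htot : ∑ i, d i = ∑ m ∈ Finset.range n, dd m := by
    have : ∀ i : Fin n, d i = dd (i : ℕ) := fun i => (hddval i).symm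
    rw [Finset.sum_congr rfl (fun i _ => this i)]
    exact Fin.sum_univ_eq_sum_range (fun m => dd m) n
  -- antitone characterization of entries ≥ 2
  have hiff : ∀ i : Fin n, 2 ≤ d i ↔ (i : ℕ) < nGe2 d := by
    intro i
    constructor
    · intro h2i
      have hsub : Finset.Iic i ⊆ Finset.univ.filter (fun j => 2 ≤ d j) := by
        intro j hj
        rw [Finset.mem_Iic] at hj
        exact Finset.mem_filter.2 ⟨Finset.mem_univ _, le_trans h2i (hd hj)⟩
      have := Finset.card_le_card hsub
      rw [Fin.card_Iic] at this
      have : (i : ℕ) + 1 ≤ nGe2 d := this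
      omega
    · intro hlt
      by_contra hcon
      have hsub : Finset.univ.filter (fun j => 2 ≤ d j) ⊆ Finset.Iio i := by
        intro j hj
        rw [Finset.mem_Iio]
        rcases Finset.mem_filter.1 hj with ⟨_, h2j⟩
        by_contra hji
        push_neg at hji
        exact hcon (le_trans h2j (hd hji))
      have := Finset.card_le_card hsub
      rw [Fin.card_Iio] at this
      have : nGe2 d ≤ (i : ℕ) := this
      omega
  have hnpos : 1 ≤ n := le_trans hk1 hkn
  -- initial H3
  have hcardB : (Finset.range n \ Finset.range k).card = n - k := by
    rw [Finset.card_sdiff_of_subset (Finset.range_subset_range.2 hkn), Finset.card_range, Finset.card_range]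
  have hH3 : ∑ v ∈ Finset.range n \ Finset.range k, dd v = ∑ v ∈ Finset.range k, dd v ∨
      ∑ v ∈ Finset.range n \ Finset.range k, dd v + 2 ≤ ∑ v ∈ Finset.range k, dd v +
        2 * (((Finset.range n \ Finset.range k)).filter
          (fun v => 2 ≤ dd v ∨ v ∈ (∅ : Finset ℕ))).card := by
    by_cases heq : ssum d k = psum d k
    · left; rw [← hpsum, ← hssum, heq]
    · right
      have hslt : 1 ≤ ssum d k - psum d k := by omega
      have hgk : k + 2 ≤ nGe2 d := by
        rcases Nat.lt_or_ge (nGe2 d) (k + 2) with h | h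
        · exfalso
          have : 2 * (nGe2 d - k) - 2 ≤ 0 := by omega
          omega
        · exact h
      have hgn : nGe2 d ≤ n := by
        have := Finset.card_filter_le Finset.univ (fun i : Fin n => 2 ≤ d i)
        simpa [nGe2] using this
      have hfil : ((Finset.range n \ Finset.range k)).filter
            (fun v => 2 ≤ dd v ∨ v ∈ (∅ : Finset ℕ))
          = Finset.range (nGe2 d) \ Finset.range k := by
        ext m
        simp only [mem_filter, mem_sdiff, mem_range, Finset.notMem_empty, or_false]
        constructor
        · rintro ⟨⟨hmn, hmk⟩, h2⟩
          have : 2 ≤ d ⟨m, hmn⟩ := by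
            have := hddval ⟨m, hmn⟩
            simp only [hdd] at h2 ⊢
            rwa [dif_pos hmn] at h2
          exact ⟨(hiff ⟨m, hmn⟩).1 this, hmk⟩
        · rintro ⟨hmg, hmk⟩
          have hmn : m < n := lt_of_lt_of_le hmg hgn
          refine ⟨⟨hmn, hmk⟩, ?_⟩
          have := (hiff ⟨m, hmn⟩).2 hmg
          simp only [hdd]
          rwa [dif_pos hmn]
      rw [hfil]
      have hcard2 : (Finset.range (nGe2 d) \ Finset.range k).card = nGe2 d - k := by
        rw [Finset.card_sdiff_of_subset (Finset.range_subset_range.2 (by omega)), Finset.card_range,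
          Finset.card_range]
      rw [hcard2, ← hpsum, ← hssum]
      omega
  -- apply main induction
  have hGood : Good (Finset.range n) (Finset.range k) ∅ dd := by
    apply main_induction n
    · rw [Finset.card_range]
    · exact Finset.range_subset_range.2 hkn
    · exact Finset.empty_subset _
    · intro v hv
      rw [Finset.mem_range] at hv
      simp only [hdd]
      rw [dif_pos hv]
      exact hpos _
    · rw [Finset.sdiff_empty, hcardB, ← hpsum]
      exact h1
    · rw [← hpsum, ← hssum]; exact h2
    · exact hH3
    · right
      rw [← htot, Finset.card_range]
      omega
    · rw [← htot]; exact heven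
  obtain ⟨p, ρ, hGF⟩ := hGood
  -- build the graph
  set q : Fin n → Option (Fin n) := fun i => (p (i : ℕ)).bind
    (fun m => if h : m < n then some ⟨m, h⟩ else none) with hq
  have hqiff : ∀ i j : Fin n, q i = some j ↔ p (i : ℕ) = some (j : ℕ) := by
    intro i j
    constructor
    · intro h
      cases hp : p (i : ℕ) with
      | none => rw [hq] at h; simp only [hp, Option.bind] at h; cases h
      | some m =>
        rw [hq] at h
        simp only [hp, Option.bind] at h
        by_cases hm : m < n
        · rw [dif_pos hm] at h
          have hj : (⟨m, hm⟩ : Fin n) = j := Option.some_injective _ h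
          subst hj
          simp [hp]
        · rw [dif_neg hm] at h; cases h
    · intro h
      rw [hq]
      simp only [h, Option.bind]
      rw [dif_pos j.isLt]
  set F : SimpleGraph (Fin n) := SimpleGraph.fromRel (fun a b => q a = some b) with hF
  have hAdj : ∀ i j : Fin n, F.Adj i j ↔ i ≠ j ∧
      (p (i : ℕ) = some (j : ℕ) ∨ p (j : ℕ) = some (i : ℕ)) := by
    intro i j
    rw [hF, SimpleGraph.fromRel_adj]
    rw [hqiff, hqiff]
  refine ⟨F, ⟨acyc_of_rank q (fun i => ρ (i : ℕ)) ?_, ?_⟩, ?_, ?_⟩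
  · intro v w h
    exact hGF.rk _ _ ((hqiff v w).1 h)
  · -- degrees
    intro i
    have hdegfin : deg F i = (Finset.univ.filter (F.Adj i)).card := by
      rw [deg, Nat.card_eq_fintype_card, Fintype.card_subtype]
    rw [hdegfin]
    have hsplitA : Finset.univ.filter (F.Adj i)
        = (Finset.univ.filter (fun u : Fin n => p (i : ℕ) = some (u : ℕ)))
          ∪ (Finset.univ.filter (fun u : Fin n => p (u : ℕ) = some (i : ℕ))) := by
      ext u
      simp only [Finset.mem_filter, Finset.mem_union, Finset.mem_univ, true_and]
      rw [hAdj]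
      constructor
      · rintro ⟨hne, h | h⟩
        · exact Or.inl h
        · exact Or.inr h
      · intro h
        have hne : i ≠ u := by
          rintro rfl
          rcases h with h | h <;> exact absurd (hGF.rk _ _ h) (lt_irrefl _)
        rcases h with h | h
        · exact ⟨hne, Or.inl h⟩
        · exact ⟨hne, Or.inr h⟩
    rw [hsplitA, Finset.card_union_of_disjoint]
    swap
    · rw [Finset.disjoint_left]
      intro u hu1 hu2
      rw [Finset.mem_filter] at hu1 hu2
      have r1 := hGF.rk _ _ hu1.2
      have r2 := hGF.rk _ _ hu2.2
      omega
    have hdeg := hGF.degree (i : ℕ) (Finset.mem_range.2 i.isLt)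
    rw [hddval i] at hdeg
    have hpar : (Finset.univ.filter (fun u : Fin n => p (i : ℕ) = some (u : ℕ))).card
        = if (p (i : ℕ)).isSome then 1 else 0 := by
      cases hp : p (i : ℕ) with
      | none =>
        have hfe : (Finset.univ.filter (fun u : Fin n => (none : Option ℕ) = some ((u : Fin n) : ℕ)))
            = (∅ : Finset (Fin n)) := by
          rw [Finset.filter_eq_empty_iff]
          intro u _
          simp
        rw [hfe]
        simp
      | some m =>
        have hmn : m < n := Finset.mem_range.1 (hGF.mem _ _ hp).2
        have hfe : (Finset.univ.filter (fun u : Fin n => (some m : Option ℕ) = some ((u : Fin n) : ℕ)))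
            = {(⟨m, hmn⟩ : Fin n)} := by
          ext u
          simp only [Finset.mem_filter, Finset.mem_univ, true_and, Finset.mem_singleton]
          constructor
          · intro h
            have hmu : m = (u : ℕ) := Option.some_injective _ h
            exact (Fin.ext (by simpa using hmu.symm))
          · rintro rfl
            rfl
        rw [hfe]
        simp
    have hchild : (Finset.univ.filter (fun u : Fin n => p (u : ℕ) = some (i : ℕ))).card
        = ((Finset.range n).filter (fun u => p u = some (i : ℕ))).card := by
      refine Finset.card_bij (fun u _ => (u : ℕ)) ?_ ?_ ?_
      · intro u hu
        rw [Finset.mem_filter] at hu ⊢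
        exact ⟨Finset.mem_range.2 u.isLt, hu.2⟩
      · intro u _ v _ h
        exact Fin.ext h
      · intro v hv
        rw [Finset.mem_filter] at hv
        have hvn : v < n := Finset.mem_range.1 hv.1
        exact ⟨⟨v, hvn⟩, Finset.mem_filter.2 ⟨Finset.mem_univ _, hv.2⟩, rfl⟩
    rw [hpar, hchild]
    omega
  · -- independence
    intro u hu v hv hadj
    rw [hAdj] at hadj
    rcases hadj.2 with h | h
    · exact hGF.indep _ (Finset.mem_range.2 hu) _ (Finset.mem_range.2 hv) h
    · exact hGF.indep _ (Finset.mem_range.2 hv) _ (Finset.mem_range.2 hu) h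
  · -- domination
    intro v hv
    have hvB : (v : ℕ) ∈ Finset.range n := Finset.mem_range.2 v.isLt
    have hvA : (v : ℕ) ∉ Finset.range k := fun hc => hv (Finset.mem_range.1 hc)
    obtain ⟨a, haA, hor⟩ := hGF.dom _ hvB hvA (Finset.notMem_empty _)
    have hak : a < k := Finset.mem_range.1 haA
    have han : a < n := lt_of_lt_of_le hak hkn
    refine ⟨⟨a, han⟩, hak, ?_⟩
    rw [hAdj]
    constructor
    · intro hc
      have : a = (v : ℕ) := by rw [← hc]
      rcases hor with h | h <;> rw [this] at h <;>
        exact absurd (hGF.rk _ _ h) (lt_irrefl _)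
    · rcases hor with h | h
      · exact Or.inr h
      · exact Or.inl h
end

section
/- Let d = (d_1, ..., d_n) be a non-increasing graphic sequence with d_n ≥ 1, and let k be the minimum of γ(G) over all realizations G of d. Then there exists a realization G of d with vertex set {u_1, ..., u_n}, d_G(u_i) = d_i for all i, such that both D = {u_1, ..., u_k} and its complement {u_{k+1}, ..., u_n} are dominating sets of G. -/
open Finset

set_option maxHeartbeats 1000000

noncomputable def nbr {n : ℕ} (G : SimpleGraph (Fin n)) (v : Fin n) : Finset (Fin n) :=
  @Finset.filter _ (G.Adj v) (Classical.decPred _) Finset.univ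

lemma mem_nbr {n : ℕ} {G : SimpleGraph (Fin n)} {v y : Fin n} : y ∈ nbr G v ↔ G.Adj v y := by
  rw [nbr, @Finset.mem_filter _ _ (Classical.decPred _) _ _]; simp

def tglGraph {n : ℕ} (G : SimpleGraph (Fin n)) (p : Fin n → Fin n → Prop)
    (hs : ∀ x y, p x y → p y x) (hi : ∀ x, ¬ p x x) : SimpleGraph (Fin n) where
  Adj x y := Xor' (G.Adj x y) (p x y)
  symm := by
    constructor
    intro x y h
    rcases h with ⟨h1, h2⟩ | ⟨h1, h2⟩
    · exact Or.inl ⟨G.adj_symm h1, fun hp => h2 (hs _ _ hp)⟩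
    · exact Or.inr ⟨hs _ _ h1, fun hp => h2 (G.adj_symm hp)⟩
  loopless := by
    constructor
    intro x h
    rcases h with ⟨h1, _⟩ | ⟨h1, _⟩
    · exact G.loopless.irrefl x h1
    · exact hi x h1

lemma tglGraph_adj {n : ℕ} (G : SimpleGraph (Fin n)) (p : Fin n → Fin n → Prop)
    (hs : ∀ x y, p x y → p y x) (hi : ∀ x, ¬ p x x) (x y : Fin n) :
    (tglGraph G p hs hi).Adj x y ↔ Xor' (G.Adj x y) (p x y) := Iff.rfl

lemma nbr_tglGraph {n : ℕ} (G : SimpleGraph (Fin n)) (p : Fin n → Fin n → Prop)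
    (hs : ∀ x y, p x y → p y x) (hi : ∀ x, ¬ p x x) (x : Fin n) (P : Finset (Fin n))
    (hP : ∀ y, y ∈ P ↔ p x y) :
    nbr (tglGraph G p hs hi) x = symmDiff (nbr G x) P := by
  apply Finset.ext
  intro y
  rw [Finset.mem_symmDiff, mem_nbr, mem_nbr, hP, tglGraph_adj, Xor']; exact Iff.rfl

lemma card_symmDiff_of_disjoint {n : ℕ} {A B : Finset (Fin n)} (h : Disjoint A B) :
    (symmDiff A B).card = A.card + B.card := by
  rw [h.symmDiff_eq_sup]; exact Finset.card_union_of_disjoint h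

lemma card_symmDiff_of_subset {n : ℕ} {A B : Finset (Fin n)} (h : B ⊆ A) :
    (symmDiff A B).card = A.card - B.card := by
  rw [symmDiff_of_ge h]; exact Finset.card_sdiff_of_subset h

lemma card_symmDiff_pair {n : ℕ} {A : Finset (Fin n)} {x y : Fin n} (hx : x ∈ A) (hy : y ∉ A)
    (hxy : x ≠ y) : (symmDiff A {x, y}).card = A.card := by
  have h : symmDiff A {x, y} = insert y (A.erase x) := by
    apply Finset.ext
    intro a
    rw [Finset.mem_symmDiff]
    simp only [Finset.mem_insert, Finset.mem_erase, Finset.mem_singleton]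
    by_cases h1 : a = x <;> by_cases h2 : a = y <;> subst_vars <;> simp_all
  rw [h, Finset.card_insert_of_notMem (by simp [hy]), Finset.card_erase_of_mem hx]
  have : 1 ≤ A.card := Finset.card_pos.2 ⟨x, hx⟩
  omega

lemma card_nbr_comap {n : ℕ} (G : SimpleGraph (Fin n)) (τ : Equiv.Perm (Fin n)) (x : Fin n) :
    (nbr (SimpleGraph.comap (τ : Fin n → Fin n) G) x).card = (nbr G (τ x)).card := by
  apply Finset.card_bij (fun y _ => τ y)
  · intro a ha; rw [mem_nbr] at ha ⊢; exact ha
  · intro a _ b _ h; exact τ.injective h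
  · intro b hb
    refine ⟨τ.symm b, ?_, by simp⟩
    rw [mem_nbr] at hb ⊢
    simpa using hb

lemma Tmove {n : ℕ} (d : Fin n → ℕ) (G : SimpleGraph (Fin n)) (hG : ∀ i, (nbr G i).card = d i)
    {u v : Fin n} (hne : u ≠ v) (hdle : d v ≤ d u)
    (T : Finset (Fin n)) (hT : T ⊆ (nbr G u) \ insert v (nbr G v))
    (hTcard : T.card = d u - d v)
    (D : Finset (Fin n)) (hdom : DomSet G ↑D) (hu : u ∉ D) (hv : v ∈ D)
    (hvdom : G.Adj u v ∨ ∃ w ∈ D, w ≠ v ∧ G.Adj u w ∧ w ∉ T) :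
    ∃ G' : SimpleGraph (Fin n), (∀ i, (nbr G' i).card = d i) ∧
      DomSet G' ↑(insert u (D.erase v)) := by
  classical
  -- basic facts about T
  have hTfacts : ∀ y ∈ T, G.Adj u y ∧ ¬ G.Adj v y ∧ y ≠ v ∧ y ≠ u := by
    intro y hy
    have h := hT hy
    rw [Finset.mem_sdiff, Finset.mem_insert, mem_nbr] at h
    push_neg at h
    obtain ⟨h1, h2, h3⟩ := h
    exact ⟨h1, fun ha => h3 (mem_nbr.2 ha), h2, fun he => G.loopless.irrefl u (he ▸ h1)⟩
  have hTu : u ∉ T := fun h => (hTfacts u h).2.2.2 rfl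
  have hTv : v ∉ T := fun h => (hTfacts v h).2.2.1 rfl
  set τ : Equiv.Perm (Fin n) := Equiv.swap u v with hτ
  have hτu : τ u = v := Equiv.swap_apply_left u v
  have hτv : τ v = u := Equiv.swap_apply_right u v
  have hτx : ∀ x, x ≠ u → x ≠ v → τ x = x := fun x h1 h2 => Equiv.swap_apply_of_ne_of_ne h1 h2
  set G₁ : SimpleGraph (Fin n) := SimpleGraph.comap (τ : Fin n → Fin n) G with hG₁
  have hG₁adj : ∀ x y, G₁.Adj x y ↔ G.Adj (τ x) (τ y) := fun x y => Iff.rfl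
  set p : Fin n → Fin n → Prop :=
    fun x y => ((x = u ∨ x = v) ∧ y ∈ T) ∨ ((y = u ∨ y = v) ∧ x ∈ T) with hp
  have hs : ∀ x y, p x y → p y x := by
    intro x y h; rw [hp] at h ⊢; tauto
  have hi : ∀ x, ¬ p x x := by
    intro x h
    rw [hp] at h
    rcases h with ⟨h1, h2⟩ | ⟨h1, h2⟩ <;>
      rcases h1 with rfl | rfl <;> [exact hTu h2; exact hTv h2; exact hTu h2; exact hTv h2]
  refine ⟨tglGraph G₁ p hs hi, ?_, ?_⟩
  · -- degrees
    intro x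
    by_cases hxu : x = u
    · subst hxu
      have hP : ∀ y, y ∈ T ↔ p x y := by
        intro y
        rw [hp]
        constructor
        · intro h; exact Or.inl ⟨Or.inl rfl, h⟩
        · rintro (⟨_, h⟩ | ⟨_, h⟩); exact h; exact absurd h hTu
      rw [nbr_tglGraph _ _ _ _ x T hP, card_symmDiff_of_disjoint, card_nbr_comap, hτu, hG, hTcard]
      · omega
      · rw [Finset.disjoint_left]
        intro y hy hyT
        have := (hTfacts y hyT).2.1
        rw [mem_nbr, hG₁adj, hτu, hτx y (hTfacts y hyT).2.2.2 (hTfacts y hyT).2.2.1] at hy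
        exact this hy
    · by_cases hxv : x = v
      · subst hxv
        have hP : ∀ y, y ∈ T ↔ p x y := by
          intro y
          rw [hp]
          constructor
          · intro h; exact Or.inl ⟨Or.inr rfl, h⟩
          · rintro (⟨_, h⟩ | ⟨_, h⟩); exact h; exact absurd h hTv
        have hsub : T ⊆ nbr G₁ x := by
          intro y hy
          rw [mem_nbr, hG₁adj, hτv, hτx y (hTfacts y hy).2.2.2 (hTfacts y hy).2.2.1]
          exact (hTfacts y hy).1
        rw [nbr_tglGraph _ _ _ _ x T hP, card_symmDiff_of_subset hsub, card_nbr_comap, hτv, hG,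
          hTcard]
        omega
      · by_cases hxT : x ∈ T
        · have hP : ∀ y, y ∈ ({v, u} : Finset (Fin n)) ↔ p x y := by
            intro y
            rw [hp]
            simp only [Finset.mem_insert, Finset.mem_singleton]
            constructor
            · rintro (rfl | rfl)
              · exact Or.inr ⟨Or.inr rfl, hxT⟩
              · exact Or.inr ⟨Or.inl rfl, hxT⟩
            · rintro (⟨h1, _⟩ | ⟨h1, _⟩)
              · rcases h1 with rfl | rfl; exact (hxu rfl).elim; exact (hxv rfl).elim
              · tauto
          have hvmem : v ∈ nbr G₁ x := by
            rw [mem_nbr, hG₁adj, hτv, hτx x hxu hxv]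
            exact G.adj_symm (hTfacts x hxT).1
          have humem : u ∉ nbr G₁ x := by
            rw [mem_nbr, hG₁adj, hτu, hτx x hxu hxv]
            exact fun h => (hTfacts x hxT).2.1 (G.adj_symm h)
          rw [nbr_tglGraph _ _ _ _ x _ hP, card_symmDiff_pair hvmem humem (Ne.symm hne),
            card_nbr_comap, hτx x hxu hxv, hG]
        · have hP : ∀ y, y ∈ (∅ : Finset (Fin n)) ↔ p x y := by
            intro y
            rw [hp]
            simp only [Finset.notMem_empty, false_iff]
            rintro (⟨h1, _⟩ | ⟨_, h2⟩)
            · rcases h1 with rfl | rfl; exact hxu rfl; exact hxv rfl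
            · exact hxT h2
          rw [nbr_tglGraph _ _ _ _ x _ hP, card_symmDiff_of_subset (Finset.empty_subset _),
            card_nbr_comap, hτx x hxu hxv, hG]
          simp
  · -- domination
    intro x hx
    simp only [Finset.coe_insert, Set.mem_insert_iff, Finset.mem_coe, Finset.mem_erase] at hx
    push_neg at hx
    obtain ⟨hxu, hxDv⟩ := hx
    by_cases hxv : x = v
    · subst hxv
      rcases hvdom with hA | ⟨w, hwD, hwv, hwadj, hwT⟩
      · refine ⟨u, by simp, ?_⟩
        rw [tglGraph_adj]
        left
        constructor
        · rw [hG₁adj, hτu, hτv]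
          exact G.adj_symm hA
        · rw [hp]
          rintro (⟨_, h⟩ | ⟨_, h⟩); exact hTv h; exact hTu h
      · have hwu : w ≠ u := fun h => hu (h ▸ hwD)
        refine ⟨w, ?_, ?_⟩
        · simp only [Finset.coe_insert, Set.mem_insert_iff, Finset.mem_coe, Finset.mem_erase]
          exact Or.inr ⟨hwv, hwD⟩
        · rw [tglGraph_adj]
          left
          constructor
          · rw [hG₁adj, hτv, hτx w hwu hwv]
            exact G.adj_symm hwadj
          · rw [hp]
            rintro (⟨h1, h2⟩ | ⟨_, h2⟩)
            · rcases h1 with rfl | rfl; exact hwu rfl; exact hwv rfl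
            · exact hwT h2
    · have hxD : x ∉ D := hxDv hxv
      obtain ⟨w, hwD, hwadj⟩ := hdom x (by simpa using hxD)
      rw [Finset.mem_coe] at hwD
      by_cases hwv : w = v
      · subst hwv
        have hxT : x ∉ T := fun h => (hTfacts x h).2.1 hwadj
        refine ⟨u, by simp, ?_⟩
        rw [tglGraph_adj]
        left
        constructor
        · rw [hG₁adj, hτu, hτx x hxu hxv]
          exact hwadj
        · rw [hp]
          rintro (⟨_, h⟩ | ⟨h1, _⟩)
          · exact hxT h
          · rcases h1 with rfl | rfl; exact hxu rfl; exact hxv rfl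
      · have hwu : w ≠ u := fun h => hu (h ▸ hwD)
        refine ⟨w, ?_, ?_⟩
        · simp only [Finset.coe_insert, Set.mem_insert_iff, Finset.mem_coe, Finset.mem_erase]
          exact Or.inr ⟨hwv, hwD⟩
        · rw [tglGraph_adj]
          left
          constructor
          · rw [hG₁adj, hτx w hwu hwv, hτx x hxu hxv]
            exact hwadj
          · rw [hp]
            rintro (⟨h1, _⟩ | ⟨h1, _⟩)
            · rcases h1 with rfl | rfl; exact hwu rfl; exact hwv rfl
            · rcases h1 with rfl | rfl; exact hxu rfl; exact hxv rfl

lemma pool_card {n : ℕ} (G : SimpleGraph (Fin n)) (u v : Fin n) :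
    (nbr G u).card - (nbr G v).card ≤ ((nbr G u) \ insert v (nbr G v)).card := by
  have key : ((nbr G u) ∩ insert v (nbr G v)).card ≤ (nbr G v).card := by
    by_cases hA : G.Adj u v
    · have hsub : (nbr G u) ∩ insert v (nbr G v) ⊆ (insert v (nbr G v)).erase u := by
        intro y hy
        rw [Finset.mem_inter] at hy
        rw [Finset.mem_erase]
        exact ⟨fun h => G.loopless.irrefl u (mem_nbr.1 (h ▸ hy.1)), hy.2⟩
      calc ((nbr G u) ∩ insert v (nbr G v)).card ≤ ((insert v (nbr G v)).erase u).card :=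
            Finset.card_le_card hsub
        _ = (insert v (nbr G v)).card - 1 := Finset.card_erase_of_mem
            (Finset.mem_insert_of_mem (mem_nbr.2 (G.adj_symm hA)))
        _ ≤ (nbr G v).card := by
            rw [Finset.card_insert_of_notMem (fun h => G.loopless.irrefl v (mem_nbr.1 h))]
            omega
    · have hsub : (nbr G u) ∩ insert v (nbr G v) ⊆ nbr G v := by
        intro y hy
        rw [Finset.mem_inter, Finset.mem_insert] at hy
        rcases hy.2 with rfl | h
        · exact absurd (mem_nbr.1 hy.1) hA
        · exact h
      exact Finset.card_le_card hsub
  have := Finset.card_sdiff_add_card_inter (nbr G u) (insert v (nbr G v))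
  omega

def swPairs {n : ℕ} (a b c e : Fin n) (x y : Fin n) : Prop :=
  (x = a ∧ y = b) ∨ (x = b ∧ y = a) ∨ (x = c ∧ y = e) ∨ (x = e ∧ y = c) ∨
  (x = a ∧ y = c) ∨ (x = c ∧ y = a) ∨ (x = b ∧ y = e) ∨ (x = e ∧ y = b)

lemma twoSwitch {n : ℕ} (d : Fin n → ℕ) (G : SimpleGraph (Fin n))
    (hG : ∀ i, (nbr G i).card = d i) {a b c e : Fin n}
    (hab : G.Adj a b) (hce : G.Adj c e) (hac : ¬ G.Adj a c) (hbe : ¬ G.Adj b e)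
    (hae : a ≠ e) (hbc : b ≠ c) (hac' : a ≠ c) (hbe' : b ≠ e) :
    ∃ G' : SimpleGraph (Fin n), (∀ i, (nbr G' i).card = d i) ∧
      (∀ x y, G'.Adj x y ↔ Xor' (G.Adj x y) (swPairs a b c e x y)) := by
  classical
  have hab' : a ≠ b := G.ne_of_adj hab
  have hce' : c ≠ e := G.ne_of_adj hce
  have hba : b ≠ a := hab'.symm
  have hec : e ≠ c := hce'.symm
  have hca : c ≠ a := hac'.symm
  have hea : e ≠ a := hae.symm
  have hcb : c ≠ b := hbc.symm
  have heb : e ≠ b := hbe'.symm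
  have hs : ∀ x y, swPairs a b c e x y → swPairs a b c e y x := by
    intro x y h; unfold swPairs at h ⊢; tauto
  have hi : ∀ x, ¬ swPairs a b c e x x := by
    intro x h
    unfold swPairs at h
    rcases h with ⟨h1, h2⟩ | ⟨h1, h2⟩ | ⟨h1, h2⟩ | ⟨h1, h2⟩ | ⟨h1, h2⟩ | ⟨h1, h2⟩ | ⟨h1, h2⟩ |
      ⟨h1, h2⟩
    · exact hab' (h1 ▸ h2)
    · exact hba (h1 ▸ h2)
    · exact hce' (h1 ▸ h2)
    · exact hec (h1 ▸ h2)
    · exact hac' (h1 ▸ h2)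
    · exact hca (h1 ▸ h2)
    · exact hbe' (h1 ▸ h2)
    · exact heb (h1 ▸ h2)
  refine ⟨tglGraph G _ hs hi, ?_, fun x y => tglGraph_adj _ _ _ _ x y⟩
  intro x
  by_cases hxa : x = a
  · subst hxa
    have hP : ∀ y, y ∈ ({b, c} : Finset (Fin n)) ↔ swPairs x b c e x y := by
      intro y
      simp only [swPairs, Finset.mem_insert, Finset.mem_singleton, hab', hba, hce', hec, hac',
        hca, hae, hea, hbc, hcb, hbe', heb, true_and, false_and, and_false, and_true, or_false,
        false_or, eq_self_iff_true]
      try tauto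
    rw [nbr_tglGraph _ _ _ _ x _ hP,
      card_symmDiff_pair (mem_nbr.2 hab) (fun h => hac (mem_nbr.1 h)) hbc, hG]
  · by_cases hxb : x = b
    · subst hxb
      have hP : ∀ y, y ∈ ({a, e} : Finset (Fin n)) ↔ swPairs a x c e x y := by
        intro y
        simp only [swPairs, Finset.mem_insert, Finset.mem_singleton, hab', hba, hce', hec, hac',
          hca, hae, hea, hbc, hcb, hbe', heb, true_and, false_and, and_false, and_true, or_false,
          false_or, eq_self_iff_true]
        try tauto
      rw [nbr_tglGraph _ _ _ _ x _ hP,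
        card_symmDiff_pair (mem_nbr.2 (G.adj_symm hab)) (fun h => hbe (mem_nbr.1 h)) hae, hG]
    · by_cases hxc : x = c
      · subst hxc
        have hP : ∀ y, y ∈ ({e, a} : Finset (Fin n)) ↔ swPairs a b x e x y := by
          intro y
          simp only [swPairs, Finset.mem_insert, Finset.mem_singleton, hab', hba, hce', hec, hac',
            hca, hae, hea, hbc, hcb, hbe', heb, true_and, false_and, and_false, and_true, or_false,
            false_or, eq_self_iff_true]
          try tauto
        rw [nbr_tglGraph _ _ _ _ x _ hP,
          card_symmDiff_pair (mem_nbr.2 hce) (fun h => hac (G.adj_symm (mem_nbr.1 h))) (Ne.symm hae),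
          hG]
      · by_cases hxe : x = e
        · subst hxe
          have hP : ∀ y, y ∈ ({c, b} : Finset (Fin n)) ↔ swPairs a b c x x y := by
            intro y
            simp only [swPairs, Finset.mem_insert, Finset.mem_singleton, hab', hba, hce', hec,
              hac', hca, hae, hea, hbc, hcb, hbe', heb, true_and, false_and, and_false, and_true,
              or_false, false_or, eq_self_iff_true]
            try tauto
          rw [nbr_tglGraph _ _ _ _ x _ hP,
            card_symmDiff_pair (mem_nbr.2 (G.adj_symm hce)) (fun h => hbe (G.adj_symm (mem_nbr.1 h)))
              (Ne.symm hbc), hG]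
        · have hP : ∀ y, y ∈ (∅ : Finset (Fin n)) ↔ swPairs a b c e x y := by
            intro y
            simp only [swPairs, Finset.notMem_empty, false_iff]
            rintro (⟨rfl, _⟩ | ⟨rfl, _⟩ | ⟨rfl, _⟩ | ⟨rfl, _⟩ | ⟨rfl, _⟩ | ⟨rfl, _⟩ | ⟨rfl, _⟩ |
              ⟨rfl, _⟩) <;> tauto
          rw [nbr_tglGraph _ _ _ _ x _ hP, card_symmDiff_of_subset (Finset.empty_subset _), hG]
          simp

lemma step {n : ℕ} (d : Fin n → ℕ) (hd : Antitone d) (hpos : ∀ i, 1 ≤ d i)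
    (G : SimpleGraph (Fin n)) (hG : ∀ i, (nbr G i).card = d i)
    (D : Finset (Fin n)) (hdom : DomSet G ↑D)
    {u v : Fin n} (hu : u ∉ D) (hv : v ∈ D) (huv : u < v) :
    ∃ (G' : SimpleGraph (Fin n)) (D' : Finset (Fin n)),
      (∀ i, (nbr G' i).card = d i) ∧ D'.card = D.card ∧ DomSet G' ↑D' ∧
      ((∑ i ∈ D, d i < ∑ i ∈ D', d i) ∨
       (∑ i ∈ D', d i = ∑ i ∈ D, d i ∧ ∑ i ∈ D', (i : ℕ) < ∑ i ∈ D, (i : ℕ))) := by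
  classical
  have hne : u ≠ v := ne_of_lt huv
  have hdle : d v ≤ d u := hd (le_of_lt huv)
  have huval : (u : ℕ) < (v : ℕ) := huv
  set pool : Finset (Fin n) := (nbr G u) \ insert v (nbr G v) with hpooldef
  have hpoolcard : d u - d v ≤ pool.card := by
    have := pool_card G u v
    rw [hG, hG] at this
    exact this
  have hDsum : ∀ f : Fin n → ℕ, ∑ i ∈ D, f i = f v + ∑ i ∈ D.erase v, f i := by
    intro f
    exact (Finset.add_sum_erase D f hv).symm
  have hDsum' : ∀ (x : Fin n), x ∉ D → ∀ f : Fin n → ℕ,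
      ∑ i ∈ insert x (D.erase v), f i = f x + ∑ i ∈ D.erase v, f i := by
    intro x hx f
    exact Finset.sum_insert (fun h => hx (Finset.mem_of_mem_erase h))
  have hDcard : ∀ (x : Fin n), x ∉ D → (insert x (D.erase v)).card = D.card := by
    intro x hx
    rw [Finset.card_insert_of_notMem (fun h => hx (Finset.mem_of_mem_erase h)),
      Finset.card_erase_of_mem hv]
    have : 1 ≤ D.card := Finset.card_pos.2 ⟨v, hv⟩
    omega
  by_cases hC : G.Adj u v ∨ ∃ w ∈ D, w ≠ v ∧ G.Adj u w ∧ d u - d v ≤ (pool.erase w).card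
  · -- T-move case
    have hTex : ∃ T : Finset (Fin n), T ⊆ pool ∧ T.card = d u - d v ∧
        (G.Adj u v ∨ ∃ w ∈ D, w ≠ v ∧ G.Adj u w ∧ w ∉ T) := by
      rcases hC with hA | ⟨w, hwD, hwv, hwadj, hwcard⟩
      · obtain ⟨T, hT1, hT2⟩ := Finset.exists_subset_card_eq hpoolcard
        exact ⟨T, hT1, hT2, Or.inl hA⟩
      · obtain ⟨T, hT1, hT2⟩ := Finset.exists_subset_card_eq hwcard
        exact ⟨T, hT1.trans (Finset.erase_subset _ _), hT2,
          Or.inr ⟨w, hwD, hwv, hwadj, fun h => (Finset.mem_erase.1 (hT1 h)).1 rfl⟩⟩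
    obtain ⟨T, hT1, hT2, hvdom⟩ := hTex
    obtain ⟨G', hG', hdom'⟩ := Tmove d G hG hne hdle T hT1 hT2 D hdom hu hv hvdom
    refine ⟨G', insert u (D.erase v), hG', hDcard u hu, hdom', ?_⟩
    rw [hDsum d, hDsum' u hu d]
    rcases Nat.lt_or_ge (d v) (d u) with h | h
    · left; omega
    · right
      refine ⟨by omega, ?_⟩
      rw [hDsum (fun i => (i : ℕ)), hDsum' u hu (fun i => (i : ℕ))]
      omega
  · push_neg at hC
    obtain ⟨hnadj, hw⟩ := hC
    obtain ⟨w₀, hw₀D', hw₀adj⟩ := hdom u (by simpa using hu)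
    rw [Finset.mem_coe] at hw₀D'
    have hw₀D : w₀ ∈ D := hw₀D'
    have hw₀adj' : G.Adj u w₀ := G.adj_symm hw₀adj
    have hw₀u : u ≠ w₀ := G.ne_of_adj hw₀adj'
    have hw₀v : w₀ ≠ v := by
      rintro rfl
      exact hnadj (G.adj_symm hw₀adj)
    have h1 : (pool.erase w₀).card < d u - d v := hw w₀ hw₀D hw₀v hw₀adj'
    have hw₀pool : w₀ ∈ pool := by
      by_contra h
      rw [Finset.erase_eq_of_notMem h] at h1
      omega
    have hpc : pool.card = d u - d v := by
      have := Finset.card_erase_of_mem hw₀pool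
      omega
    have hdlt : d v < d u := by omega
    -- N(v) ⊆ N(u)
    have hNvNu : nbr G v ⊆ nbr G u := by
      have hsub : nbr G u ∩ insert v (nbr G v) ⊆ nbr G v := by
        intro y hy
        rw [Finset.mem_inter, Finset.mem_insert] at hy
        rcases hy.2 with rfl | h
        · exact absurd (mem_nbr.1 hy.1) hnadj
        · exact h
      have h2 := Finset.card_sdiff_add_card_inter (nbr G u) (insert v (nbr G v))
      rw [hG] at h2
      rw [← hpooldef] at h2
      have hintercard : (nbr G u ∩ insert v (nbr G v)).card = d v := by omega
      have heq : nbr G u ∩ insert v (nbr G v) = nbr G v :=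
        Finset.eq_of_subset_of_card_le hsub (by rw [hG, hintercard])
      intro y hy
      rw [← heq] at hy
      exact (Finset.mem_inter.1 hy).1
    have hDNv : ∀ w ∈ D, ¬ G.Adj v w := by
      intro w hwD hadj
      have hwv : w ≠ v := fun h => G.loopless.irrefl v (h ▸ hadj)
      have hwnbr : w ∈ nbr G v := mem_nbr.2 hadj
      have hwu : G.Adj u w := mem_nbr.1 (hNvNu hwnbr)
      have hcard := hw w hwD hwv hwu
      by_cases hwp : w ∈ pool
      · rw [hpooldef, Finset.mem_sdiff] at hwp
        exact hwp.2 (Finset.mem_insert_of_mem hwnbr)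
      · rw [Finset.erase_eq_of_notMem hwp] at hcard
        omega
    have hzND : ∀ z ∈ nbr G v, z ∉ D := fun z hz hzD => hDNv z hzD (mem_nbr.1 hz)
    have hNvadj : ∀ z ∈ nbr G v, G.Adj u z := fun z hz => mem_nbr.1 (hNvNu hz)
    by_cases hM2 : ∃ z ∈ nbr G v, ¬ G.Adj w₀ z
    · -- 2-switch: remove uw₀, vz; add uv, w₀z
      obtain ⟨z, hz, hnwz⟩ := hM2
      have hzadj : G.Adj v z := mem_nbr.1 hz
      have huz : u ≠ z := G.ne_of_adj (hNvadj z hz)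
      have hzv : z ≠ v := fun h => G.loopless.irrefl v (h ▸ hzadj)
      have hw₀z : w₀ ≠ z := fun h => hzND z hz (h ▸ hw₀D)
      obtain ⟨G', hG', hchar⟩ :=
        twoSwitch d G hG (a := u) (b := w₀) (c := v) (e := z) hw₀adj' hzadj hnadj hnwz huz
          hw₀v hne hw₀z
      refine ⟨G', insert u (D.erase v), hG', hDcard u hu, ?_, ?_⟩
      · intro x hx
        simp only [Finset.coe_insert, Set.mem_insert_iff, Finset.mem_coe, Finset.mem_erase] at hx
        push_neg at hx
        obtain ⟨hxu, hxDv⟩ := hx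
        by_cases hxv : x = v
        · subst hxv
          refine ⟨u, by simp, ?_⟩
          rw [hchar]
          exact Or.inr ⟨Or.inr (Or.inr (Or.inr (Or.inr (Or.inl ⟨rfl, rfl⟩)))), hnadj⟩
        · have hxD : x ∉ D := hxDv hxv
          by_cases hxz : x = z
          · subst hxz
            refine ⟨u, by simp, ?_⟩
            rw [hchar]
            refine Or.inl ⟨hNvadj x hz, ?_⟩
            have f1 : x ≠ w₀ := fun h => hzND x hz (h ▸ hw₀D)
            unfold swPairs
            tauto
          · obtain ⟨w, hwD, hwadjx⟩ := hdom x (by simpa using hxD)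
            rw [Finset.mem_coe] at hwD
            by_cases hwv : w = v
            · have hxnv : x ∈ nbr G v := mem_nbr.2 (hwv ▸ hwadjx)
              have hxw₀ : x ≠ w₀ := fun h => hxD (h ▸ hw₀D)
              refine ⟨u, by simp, ?_⟩
              rw [hchar]
              refine Or.inl ⟨hNvadj x hxnv, ?_⟩
              unfold swPairs
              tauto
            · have hwu : w ≠ u := fun h => hu (h ▸ hwD)
              have hwz : w ≠ z := fun h => hzND z hz (h ▸ hwD)
              refine ⟨w, ?_, ?_⟩
              · simp only [Finset.coe_insert, Set.mem_insert_iff, Finset.mem_coe,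
                  Finset.mem_erase]
                exact Or.inr ⟨hwv, hwD⟩
              · rw [hchar]
                refine Or.inl ⟨hwadjx, ?_⟩
                unfold swPairs
                tauto
      · left
        rw [hDsum d, hDsum' u hu d]
        omega
    · push_neg at hM2
      by_cases hM3 : ∃ z ∈ nbr G v, ∃ z' ∈ nbr G v, z ≠ z' ∧ ¬ G.Adj z z'
      · -- 2-switch: remove vz, w₀z'; add vw₀, zz'
        obtain ⟨z, hz, z', hz', hzz', hnzz'⟩ := hM3
        have hzadj : G.Adj v z := mem_nbr.1 hz
        have hz'adj : G.Adj v z' := mem_nbr.1 hz'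
        have hvz' : v ≠ z' := G.ne_of_adj hz'adj
        have hzw₀ : z ≠ w₀ := fun h => hzND z hz (h ▸ hw₀D)
        have hz'w₀ : z' ≠ w₀ := fun h => hzND z' hz' (h ▸ hw₀D)
        have hvw₀ : ¬ G.Adj v w₀ := hDNv w₀ hw₀D
        have huz : u ≠ z := G.ne_of_adj (hNvadj z hz)
        have huz' : u ≠ z' := G.ne_of_adj (hNvadj z' hz')
        obtain ⟨G', hG', hchar⟩ :=
          twoSwitch d G hG (a := v) (b := z) (c := w₀) (e := z') hzadj (hM2 z' hz') hvw₀ hnzz'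
            hvz' hzw₀ hw₀v.symm hzz'
        refine ⟨G', insert u (D.erase v), hG', hDcard u hu, ?_, ?_⟩
        · intro x hx
          simp only [Finset.coe_insert, Set.mem_insert_iff, Finset.mem_coe,
            Finset.mem_erase] at hx
          push_neg at hx
          obtain ⟨hxu, hxDv⟩ := hx
          by_cases hxv : x = v
          · subst hxv
            refine ⟨w₀, ?_, ?_⟩
            · simp only [Finset.coe_insert, Set.mem_insert_iff, Finset.mem_coe,
                Finset.mem_erase]
              exact Or.inr ⟨hw₀v, hw₀D⟩
            · rw [hchar]
              refine Or.inr ⟨Or.inr (Or.inr (Or.inr (Or.inr (Or.inr (Or.inl ⟨rfl, rfl⟩))))),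
                fun h => hvw₀ (G.adj_symm h)⟩
          · have hxD : x ∉ D := hxDv hxv
            by_cases hxz : x = z
            · subst hxz
              refine ⟨u, by simp, ?_⟩
              rw [hchar]
              refine Or.inl ⟨hNvadj x hz, ?_⟩
              unfold swPairs
              tauto
            · by_cases hxz' : x = z'
              · subst hxz'
                refine ⟨u, by simp, ?_⟩
                rw [hchar]
                refine Or.inl ⟨hNvadj x hz', ?_⟩
                unfold swPairs
                tauto
              · obtain ⟨w, hwD, hwadjx⟩ := hdom x (by simpa using hxD)
                rw [Finset.mem_coe] at hwD
                by_cases hwv : w = v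
                · have hxnv : x ∈ nbr G v := mem_nbr.2 (hwv ▸ hwadjx)
                  refine ⟨u, by simp, ?_⟩
                  rw [hchar]
                  refine Or.inl ⟨hNvadj x hxnv, ?_⟩
                  unfold swPairs
                  tauto
                · have hwz : w ≠ z := fun h => hzND z hz (h ▸ hwD)
                  have hwz' : w ≠ z' := fun h => hzND z' hz' (h ▸ hwD)
                  refine ⟨w, ?_, ?_⟩
                  · simp only [Finset.coe_insert, Set.mem_insert_iff, Finset.mem_coe,
                      Finset.mem_erase]
                    exact Or.inr ⟨hwv, hwD⟩
                  · rw [hchar]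
                    refine Or.inl ⟨hwadjx, ?_⟩
                    unfold swPairs
                    tauto
        · left
          rw [hDsum d, hDsum' u hu d]
          omega
      · -- clique case
        push_neg at hM3
        have hnv_pos : 0 < (nbr G v).card := by
          rw [hG]
          exact hpos v
        obtain ⟨z₀, hz₀⟩ := Finset.card_pos.1 hnv_pos
        have hz₀adj : G.Adj v z₀ := mem_nbr.1 hz₀
        have hz₀D : z₀ ∉ D := hzND z₀ hz₀
        have hz₀v : z₀ ≠ v := fun h => G.loopless.irrefl v (h ▸ hz₀adj)
        refine ⟨G, insert z₀ (D.erase v), hG, hDcard z₀ hz₀D, ?_, ?_⟩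
        · intro x hx
          simp only [Finset.coe_insert, Set.mem_insert_iff, Finset.mem_coe,
            Finset.mem_erase] at hx
          push_neg at hx
          obtain ⟨hxz₀, hxDv⟩ := hx
          by_cases hxv : x = v
          · subst hxv
            exact ⟨z₀, by simp, G.adj_symm hz₀adj⟩
          · have hxD : x ∉ D := hxDv hxv
            obtain ⟨w, hwD, hwadjx⟩ := hdom x (by simpa using hxD)
            rw [Finset.mem_coe] at hwD
            by_cases hwv : w = v
            · have hxnv : x ∈ nbr G v := mem_nbr.2 (hwv ▸ hwadjx)
              exact ⟨z₀, by simp, hM3 z₀ hz₀ x hxnv (fun h => hxz₀ h.symm)⟩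
            · refine ⟨w, ?_, hwadjx⟩
              simp only [Finset.coe_insert, Set.mem_insert_iff, Finset.mem_coe, Finset.mem_erase]
              exact Or.inr ⟨hwv, hwD⟩
        · left
          have hdz₀ : d v + 1 ≤ d z₀ := by
            have hsub : insert u (insert v ((nbr G v).erase z₀)) ⊆ nbr G z₀ := by
              intro y hy
              rw [Finset.mem_insert, Finset.mem_insert] at hy
              rcases hy with rfl | rfl | hy
              · exact mem_nbr.2 (G.adj_symm (hNvadj z₀ hz₀))
              · exact mem_nbr.2 (G.adj_symm hz₀adj)
              · rw [Finset.mem_erase] at hy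
                exact mem_nbr.2 (hM3 z₀ hz₀ y hy.2 (fun h => hy.1 h.symm))
            have hcard : (insert u (insert v ((nbr G v).erase z₀))).card = d v + 1 := by
              rw [Finset.card_insert_of_notMem, Finset.card_insert_of_notMem,
                Finset.card_erase_of_mem hz₀, hG]
              · have := hpos v
                omega
              · intro h
                exact G.loopless.irrefl v (mem_nbr.1 (Finset.mem_of_mem_erase h))
              · intro h
                rw [Finset.mem_insert] at h
                rcases h with rfl | h
                · exact hne rfl
                · exact hnadj (G.adj_symm (mem_nbr.1 (Finset.mem_of_mem_erase h)))
            have := Finset.card_le_card hsub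
            rw [hcard, hG] at this
            exact this
          rw [hDsum d, hDsum' z₀ hz₀D d]
          omega

lemma deg_eq_card_nbr {n : ℕ} (G : SimpleGraph (Fin n)) (v : Fin n) :
    deg G v = (nbr G v).card := by
  classical
  rw [deg, Nat.card_eq_fintype_card, Fintype.card_subtype]
  congr 1

lemma card_filter_lt {n : ℕ} (m : ℕ) (hm : m ≤ n) :
    ((Finset.univ : Finset (Fin n)).filter (fun i : Fin n => (i : ℕ) < m)).card = m := by
  classical
  have himg : ((Finset.univ : Finset (Fin n)).filter (fun i : Fin n => (i : ℕ) < m)).image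
      (fun i : Fin n => (i : ℕ)) = Finset.range m := by
    apply Finset.ext
    intro j
    simp only [Finset.mem_image, Finset.mem_filter, Finset.mem_univ, true_and, Finset.mem_range]
    constructor
    · rintro ⟨i, hi, rfl⟩; exact hi
    · intro hj; exact ⟨⟨j, lt_of_lt_of_le hj hm⟩, hj, rfl⟩
  have := Finset.card_image_of_injective
    ((Finset.univ : Finset (Fin n)).filter (fun i : Fin n => (i : ℕ) < m)) (Fin.val_injective)
  rw [himg, Finset.card_range] at this
  exact this.symm


theorem stmt13 {n : ℕ} (d : Fin n → ℕ) (hd : Antitone d) (hpos : ∀ i, 1 ≤ d i)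
    (hgraphic : ∃ G : SimpleGraph (Fin n), ∀ i, deg G i = d i) (k : ℕ)
    (hk : k = sInf {m | ∃ G : SimpleGraph (Fin n), (∀ i, deg G i = d i) ∧ domNum G = m}) :
    ∃ G : SimpleGraph (Fin n), (∀ i, deg G i = d i) ∧
      DomSet G {i | (i : ℕ) < k} ∧ DomSet G {i | k ≤ (i : ℕ)} := by
  classical
  have hRdeg : ∀ G : SimpleGraph (Fin n),
      (∀ i, deg G i = d i) ↔ (∀ i, (nbr G i).card = d i) := by
    intro G
    constructor <;> intro h i <;> have := h i <;>
      rw [deg_eq_card_nbr] at * <;> exact this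
  set S : Set ℕ := {m | ∃ G : SimpleGraph (Fin n), (∀ i, deg G i = d i) ∧ domNum G = m}
    with hS
  have hSne : S.Nonempty := by
    obtain ⟨G, hG⟩ := hgraphic
    exact ⟨domNum G, G, hG, rfl⟩
  have hkmem : k ∈ S := by
    rw [hk]
    exact Nat.sInf_mem hSne
  obtain ⟨G₀, hG₀deg, hG₀dom⟩ := hkmem
  have hklb : ∀ G : SimpleGraph (Fin n), (∀ i, deg G i = d i) → k ≤ domNum G := by
    intro G hG
    rw [hk]
    exact Nat.sInf_le ⟨G, hG, rfl⟩
  have hdomSetNe : ∀ G : SimpleGraph (Fin n),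
      {c | ∃ D : Finset (Fin n), D.card = c ∧ DomSet G ↑D}.Nonempty := by
    intro G
    refine ⟨(Finset.univ : Finset (Fin n)).card, Finset.univ, rfl, ?_⟩
    intro v hv
    exact absurd (by simp) hv
  have hD₀ : ∃ D : Finset (Fin n), D.card = k ∧ DomSet G₀ ↑D := by
    have := Nat.sInf_mem (hdomSetNe G₀)
    rw [← domNum, hG₀dom] at this
    exact this
  obtain ⟨D₀, hD₀card, hD₀dom⟩ := hD₀
  have hkn : k ≤ n := by
    rw [← hD₀card]
    calc D₀.card ≤ (Finset.univ : Finset (Fin n)).card := Finset.card_le_univ D₀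
      _ = n := by simp
  have hksmall : ∀ G : SimpleGraph (Fin n), (∀ i, (nbr G i).card = d i) →
      ∀ D : Finset (Fin n), DomSet G ↑D → k ≤ D.card := by
    intro G hG D hD
    have h1 : domNum G ≤ D.card := Nat.sInf_le ⟨D, rfl, hD⟩
    exact le_trans (hklb G ((hRdeg G).2 hG)) h1
  -- the potential function
  set Sd : ℕ := ∑ i : Fin n, d i with hSd
  set M : ℕ := n * n + 1 with hM
  set f : SimpleGraph (Fin n) → Finset (Fin n) → ℕ :=
    fun G D => (Sd - ∑ i ∈ D, d i) * M + ∑ i ∈ D, (i : ℕ) with hf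
  set P : SimpleGraph (Fin n) → Finset (Fin n) → Prop :=
    fun G D => (∀ i, (nbr G i).card = d i) ∧ D.card = k ∧ DomSet G ↑D with hP
  have hsum_le : ∀ D : Finset (Fin n), ∑ i ∈ D, d i ≤ Sd := by
    intro D
    exact Finset.sum_le_sum_of_subset (Finset.subset_univ D)
  have hidx_le : ∀ D : Finset (Fin n), ∑ i ∈ D, (i : ℕ) ≤ n * n := by
    intro D
    calc ∑ i ∈ D, (i : ℕ) ≤ ∑ _i ∈ D, n := Finset.sum_le_sum (fun i _ => le_of_lt i.isLt)
      _ = D.card * n := by rw [Finset.sum_const, smul_eq_mul]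
      _ ≤ n * n := Nat.mul_le_mul_right n (le_trans (Finset.card_le_univ D) (by simp))
  set FS : Set ℕ := {m | ∃ G D, P G D ∧ f G D = m} with hFS
  have hFSne : FS.Nonempty := ⟨f G₀ D₀, G₀, D₀, ⟨(hRdeg G₀).1 hG₀deg, hD₀card, hD₀dom⟩, rfl⟩
  obtain ⟨G₁, D₁, hP₁, hf₁⟩ := Nat.sInf_mem hFSne
  have hmin : ∀ G D, P G D → sInf FS ≤ f G D := fun G D h => Nat.sInf_le ⟨G, D, h, rfl⟩
  obtain ⟨hG₁real, hD₁card, hD₁dom⟩ := hP₁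
  set F : Finset (Fin n) := (Finset.univ : Finset (Fin n)).filter (fun i : Fin n => (i : ℕ) < k)
    with hFdef
  have hFcard : F.card = k := card_filter_lt k hkn
  have hD₁F : D₁ = F := by
    by_contra hne
    have hex : ∃ u ∈ F, u ∉ D₁ := by
      by_contra h
      push_neg at h
      exact hne (Finset.eq_of_subset_of_card_le h (by rw [hFcard, hD₁card])).symm
    obtain ⟨u, huF, huD₁⟩ := hex
    have huk : (u : ℕ) < k := by
      rw [hFdef, Finset.mem_filter] at huF
      exact huF.2
    have hex2 : ∃ v ∈ D₁, u < v := by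
      by_contra h
      push_neg at h
      have hsub : D₁ ⊆ (Finset.univ : Finset (Fin n)).filter (fun i : Fin n => (i : ℕ) < (u : ℕ)) := by
        intro x hx
        rw [Finset.mem_filter]
        refine ⟨Finset.mem_univ _, ?_⟩
        have h1 : x ≤ u := h x hx
        have h2 : x ≠ u := fun he => huD₁ (he ▸ hx)
        exact lt_of_le_of_ne (Fin.le_iff_val_le_val.1 h1) (fun he => h2 (Fin.ext he))
      have := Finset.card_le_card hsub
      rw [hD₁card, card_filter_lt (u : ℕ) (le_of_lt u.isLt)] at this
      omega
    obtain ⟨v, hvD₁, huv⟩ := hex2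
    obtain ⟨G', D', hG'real, hD'card, hD'dom, hpot⟩ :=
      step d hd hpos G₁ hG₁real D₁ hD₁dom huD₁ hvD₁ huv
    have hP' : P G' D' := ⟨hG'real, by rw [hD'card, hD₁card], hD'dom⟩
    have hlt : f G' D' < f G₁ D₁ := by
      rw [hf]
      simp only
      rcases hpot with h | ⟨h1, h2⟩
      · have hA'le : ∑ i ∈ D', d i ≤ Sd := hsum_le D'
        have h2 : Sd - ∑ i ∈ D', d i ≤ Sd - ∑ i ∈ D₁, d i - 1 := by omega
        have h3 : 1 ≤ Sd - ∑ i ∈ D₁, d i := by omega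
        calc (Sd - ∑ i ∈ D', d i) * M + ∑ i ∈ D', (i : ℕ)
            ≤ (Sd - ∑ i ∈ D₁, d i - 1) * M + n * n :=
              Nat.add_le_add (Nat.mul_le_mul_right M h2) (hidx_le D')
          _ < (Sd - ∑ i ∈ D₁, d i - 1) * M + M := by rw [hM]; omega
          _ = ((Sd - ∑ i ∈ D₁, d i - 1) + 1) * M := by ring
          _ = (Sd - ∑ i ∈ D₁, d i) * M := by
              congr 1
              omega
          _ ≤ (Sd - ∑ i ∈ D₁, d i) * M + ∑ i ∈ D₁, (i : ℕ) := Nat.le_add_right _ _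
      · rw [h1]
        omega
    have := hmin G' D' hP'
    rw [← hf₁] at this
    omega
  -- conclusion
  refine ⟨G₁, (hRdeg G₁).2 hG₁real, ?_, ?_⟩
  · have hcoe : (↑F : Set (Fin n)) = {i : Fin n | (i : ℕ) < k} := by
      apply Set.ext
      intro x
      simp [hFdef]
    rw [← hcoe, ← hD₁F]
    exact hD₁dom
  · intro v hv
    simp only [Set.mem_setOf_eq, not_le] at hv
    by_contra hno
    push_neg at hno
    simp only [Set.mem_setOf_eq] at hno
    -- all neighbors of v are < k
    have hnbrF : nbr G₁ v ⊆ F := by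
      intro y hy
      rw [hFdef, Finset.mem_filter]
      refine ⟨Finset.mem_univ _, ?_⟩
      by_contra hyk
      push_neg at hyk
      exact hno y hyk (G₁.adj_symm (mem_nbr.1 hy))
    have hvF : v ∈ F := by
      rw [hFdef, Finset.mem_filter]
      exact ⟨Finset.mem_univ _, hv⟩
    have herase : DomSet G₁ ↑(F.erase v) := by
      intro x hx
      simp only [Finset.coe_erase, Set.mem_diff, Finset.mem_coe, Set.mem_singleton_iff] at hx
      push_neg at hx
      by_cases hxv : x = v
      · subst hxv
        have hpos' : 0 < (nbr G₁ x).card := by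
          rw [hG₁real]
          exact hpos x
        obtain ⟨y, hy⟩ := Finset.card_pos.1 hpos'
        have hyv : y ≠ x := fun h => G₁.loopless.irrefl x (mem_nbr.1 (h ▸ hy))
        refine ⟨y, ?_, G₁.adj_symm (mem_nbr.1 hy)⟩
        simp only [Finset.coe_erase, Set.mem_diff, Finset.mem_coe, Set.mem_singleton_iff]
        exact ⟨hnbrF hy, hyv⟩
      · have hxF : x ∉ F := fun h => hxv (hx h)
        rw [hD₁F] at hD₁dom
        obtain ⟨w, hwF, hwadj⟩ := hD₁dom x (by simpa using hxF)
        rw [Finset.mem_coe] at hwF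
        have hwv : w ≠ v := by
          rintro rfl
          exact hxF (hnbrF (mem_nbr.2 hwadj))
        refine ⟨w, ?_, hwadj⟩
        simp only [Finset.coe_erase, Set.mem_diff, Finset.mem_coe, Set.mem_singleton_iff]
        exact ⟨hwF, hwv⟩
    have hk1 : k ≤ (F.erase v).card := hksmall G₁ hG₁real (F.erase v) herase
    rw [Finset.card_erase_of_mem hvF, hFcard] at hk1
    omega
end

section
/- For every positive integer r there exist two graphs G_1 and G_2 with the same degree sequence d such that γ(G_1) = sl(d) = r + 1 while γ(G_2) = 1 + r(r+1)/2. Concretely, G_1 is the disjoint union of r + 1 stars K_{1,r}, and G_2 is the disjoint union of a complete graph K_{r+1} and r(r+1)/2 copies of K_2. -/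
open Finset

lemma div_eq_iff_interval {r : ℕ} (hr : 0 < r) (x j : ℕ) :
    x / r = j ↔ j * r ≤ x ∧ x < j * r + r := by
  constructor
  · rintro rfl
    refine ⟨Nat.div_mul_le_self x r, ?_⟩
    have hmod := Nat.mod_lt x hr
    have hdm := Nat.div_add_mod x r
    have hc : x / r * r = r * (x / r) := by ring
    linarith
  · rintro ⟨h1, h2⟩
    exact Nat.div_eq_of_lt_le h1 (by rw [add_mul, one_mul]; exact h2)

lemma card_filter_Ico (n a l : ℕ) (h : a + l ≤ n) :
    ((univ : Finset (Fin n)).filter fun i : Fin n => a ≤ (i : ℕ) ∧ (i : ℕ) < a + l).card = l := by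
  have key : ((univ : Finset (Fin n)).filter fun i : Fin n => a ≤ (i : ℕ) ∧ (i : ℕ) < a + l)
      = Finset.map ⟨fun t : Fin l => (⟨a + (t : ℕ), by omega⟩ : Fin n),
          fun s t hst => by
            have h2 : a + (s : ℕ) = a + (t : ℕ) := congrArg Fin.val hst
            exact Fin.ext (by omega)⟩ univ := by
    ext i
    simp only [Finset.mem_filter, Finset.mem_map, Finset.mem_univ, true_and,
      Function.Embedding.coeFn_mk]
    constructor
    · rintro ⟨h1, h2⟩
      exact ⟨⟨(i : ℕ) - a, by omega⟩, Fin.ext (show a + ((i : ℕ) - a) = (i : ℕ) by omega)⟩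
    · rintro ⟨t, rfl⟩
      exact ⟨Nat.le_add_right _ _, show a + (t : ℕ) < a + l from by have := t.2; omega⟩
  rw [key, Finset.card_map, Finset.card_univ, Fintype.card_fin]

lemma deg_eq_card_filter {V : Type*} [Fintype V] (G : SimpleGraph V) [DecidableRel G.Adj]
    (v : V) : deg G v = ((univ : Finset V).filter (G.Adj v)).card := by
  rw [deg, Nat.card_eq_fintype_card, Fintype.card_subtype]

lemma domNum_eq_classes {V : Type*} [Fintype V] [DecidableEq V] {k : ℕ} (G : SimpleGraph V)
    (c : V → Fin k) (ctr : Fin k → V)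
    (hc : ∀ u v, G.Adj u v → c u = c v)
    (hctr : ∀ j, c (ctr j) = j)
    (hadj : ∀ j v, c v = j → v ≠ ctr j → G.Adj (ctr j) v) :
    domNum G = k := by
  have hinj : Function.Injective ctr := fun a b h => by rw [← hctr a, ← hctr b, h]
  have hmem : k ∈ {k' | ∃ D : Finset V, D.card = k' ∧ DomSet G ↑D} := by
    refine ⟨Finset.image ctr univ, ?_, ?_⟩
    · rw [Finset.card_image_of_injective _ hinj, Finset.card_univ, Fintype.card_fin]
    · intro v hv
      have hne : v ≠ ctr (c v) := by
        intro h
        exact hv (by rw [h]; exact Finset.mem_coe.2 (Finset.mem_image.2 ⟨c v, Finset.mem_univ _, rfl⟩))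
      exact ⟨ctr (c v), Finset.mem_coe.2 (Finset.mem_image.2 ⟨c v, Finset.mem_univ _, rfl⟩),
        hadj (c v) v rfl hne⟩
  refine le_antisymm (Nat.sInf_le hmem) (le_csInf ⟨k, hmem⟩ ?_)
  rintro m ⟨D, hcard, hdom⟩
  have hsurj : ∀ j : Fin k, ∃ u ∈ D, c u = j := by
    intro j
    by_cases h : ctr j ∈ D
    · exact ⟨ctr j, h, hctr j⟩
    · obtain ⟨u, hu, hadj'⟩ := hdom (ctr j) (by simpa using h)
      exact ⟨u, by simpa using hu, (hc _ _ hadj').trans (hctr j)⟩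
  have hsub : (univ : Finset (Fin k)) ⊆ D.image c := fun j _ => by
    obtain ⟨u, hu, he⟩ := hsurj j
    exact Finset.mem_image.2 ⟨u, hu, he⟩
  calc k = (univ : Finset (Fin k)).card := by simp
    _ ≤ (D.image c).card := Finset.card_le_card hsub
    _ ≤ D.card := Finset.card_image_le
    _ = m := hcard

/-- The disjoint union of `r+1` stars `K_{1,r}` on `Fin ((r+1)^2)`: the first `r+1`
vertices are the centers; leaf `v ≥ r+1` is attached to center `(v - (r+1)) / r`. -/
def starG (r : ℕ) : SimpleGraph (Fin ((r+1)^2)) where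
  Adj u v := u ≠ v ∧ (((u:ℕ) < r+1 ∧ r+1 ≤ (v:ℕ) ∧ ((v:ℕ) - (r+1))/r = (u:ℕ)) ∨
    ((v:ℕ) < r+1 ∧ r+1 ≤ (u:ℕ) ∧ ((u:ℕ) - (r+1))/r = (v:ℕ)))
  symm := ⟨by rintro u v ⟨h1, h2⟩; exact ⟨h1.symm, h2.symm⟩⟩
  loopless := ⟨fun u h => h.1 rfl⟩

/-- `K_{r+1}` on the first `r+1` vertices, plus a perfect matching on the rest. -/
def pairG (r : ℕ) : SimpleGraph (Fin ((r+1)^2)) where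
  Adj u v := u ≠ v ∧ (((u:ℕ) < r+1 ∧ (v:ℕ) < r+1) ∨
    (r+1 ≤ (u:ℕ) ∧ r+1 ≤ (v:ℕ) ∧ ((u:ℕ) - (r+1))/2 = ((v:ℕ) - (r+1))/2))
  symm := ⟨by
    rintro u v ⟨h1, h2⟩
    refine ⟨h1.symm, ?_⟩
    rcases h2 with ⟨ha, hb⟩ | ⟨ha, hb, hcq⟩
    · exact Or.inl ⟨hb, ha⟩
    · exact Or.inr ⟨hb, ha, hcq.symm⟩⟩
  loopless := ⟨fun u h => h.1 rfl⟩

instance (r : ℕ) : DecidableRel (starG r).Adj := fun u v =>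
  inferInstanceAs (Decidable (u ≠ v ∧ (((u:ℕ) < r+1 ∧ r+1 ≤ (v:ℕ) ∧ ((v:ℕ) - (r+1))/r = (u:ℕ)) ∨
    ((v:ℕ) < r+1 ∧ r+1 ≤ (u:ℕ) ∧ ((u:ℕ) - (r+1))/r = (v:ℕ)))))

instance (r : ℕ) : DecidableRel (pairG r).Adj := fun u v =>
  inferInstanceAs (Decidable (u ≠ v ∧ (((u:ℕ) < r+1 ∧ (v:ℕ) < r+1) ∨
    (r+1 ≤ (u:ℕ) ∧ r+1 ≤ (v:ℕ) ∧ ((u:ℕ) - (r+1))/2 = ((v:ℕ) - (r+1))/2))))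

lemma starG_adj {r : ℕ} (u v : Fin ((r+1)^2)) : (starG r).Adj u v ↔
    u ≠ v ∧ (((u:ℕ) < r+1 ∧ r+1 ≤ (v:ℕ) ∧ ((v:ℕ) - (r+1))/r = (u:ℕ)) ∨
    ((v:ℕ) < r+1 ∧ r+1 ≤ (u:ℕ) ∧ ((u:ℕ) - (r+1))/r = (v:ℕ))) := Iff.rfl

lemma pairG_adj {r : ℕ} (u v : Fin ((r+1)^2)) : (pairG r).Adj u v ↔
    u ≠ v ∧ (((u:ℕ) < r+1 ∧ (v:ℕ) < r+1) ∨
    (r+1 ≤ (u:ℕ) ∧ r+1 ≤ (v:ℕ) ∧ ((u:ℕ) - (r+1))/2 = ((v:ℕ) - (r+1))/2)) := Iff.rfl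

lemma deg_starG (r : ℕ) (hr : 1 ≤ r) (i : Fin ((r+1)^2)) :
    deg (starG r) i = if (i:ℕ) < r+1 then r else 1 := by
  have hr0 : 0 < r := hr
  have hn : (r+1)^2 = (r+1) + (r+1)*r := by ring
  rw [deg_eq_card_filter]
  by_cases hi : (i:ℕ) < r+1
  · rw [if_pos hi]
    have hbound : ((r+1) + (i:ℕ)*r) + r ≤ (r+1)^2 := by
      have h1 : ((i:ℕ)+1)*r ≤ (r+1)*r := Nat.mul_le_mul_right r hi
      have h2 : ((i:ℕ)+1)*r = (i:ℕ)*r + r := by ring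
      omega
    have key : (univ.filter ((starG r).Adj i)) =
        (univ.filter fun v : Fin ((r+1)^2) =>
          (r+1) + (i:ℕ)*r ≤ (v:ℕ) ∧ (v:ℕ) < ((r+1) + (i:ℕ)*r) + r) := by
      apply Finset.filter_congr
      intro v _
      rw [starG_adj]
      constructor
      · rintro ⟨hne, ⟨h1, h2, h3⟩ | ⟨h1, h2, h3⟩⟩
        · rw [div_eq_iff_interval hr0] at h3
          omega
        · omega
      · rintro ⟨h1, h2⟩
        have hvm : r+1 ≤ (v:ℕ) := by omega
        have hne : i ≠ v := by
          intro h
          rw [h] at hi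
          omega
        refine ⟨hne, Or.inl ⟨hi, hvm, ?_⟩⟩
        rw [div_eq_iff_interval hr0]
        omega
    rw [key, card_filter_Ico _ _ _ hbound]
  · rw [if_neg hi]
    push_neg at hi
    have hlt : ((i:ℕ) - (r+1))/r < r+1 := by
      rw [Nat.div_lt_iff_lt_mul hr0]
      have h2 := i.2
      omega
    have hcm : ((i:ℕ) - (r+1))/r < (r+1)^2 := lt_of_lt_of_le hlt (Nat.le_self_pow two_ne_zero _)
    have key : (univ.filter ((starG r).Adj i)) = {(⟨((i:ℕ) - (r+1))/r, hcm⟩ : Fin ((r+1)^2))} := by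
      ext v
      simp only [Finset.mem_filter, Finset.mem_univ, true_and, Finset.mem_singleton]
      rw [starG_adj]
      constructor
      · rintro ⟨hne, ⟨h1, h2, h3⟩ | ⟨h1, h2, h3⟩⟩
        · omega
        · exact Fin.ext h3.symm
      · rintro rfl
        refine ⟨?_, Or.inr ⟨hlt, hi, rfl⟩⟩
        intro h
        have hval : (i:ℕ) = ((i:ℕ) - (r+1))/r := congrArg Fin.val h
        omega
    rw [key, Finset.card_singleton]

lemma domNum_starG (r : ℕ) (hr : 1 ≤ r) : domNum (starG r) = r + 1 := by
  have hr0 : 0 < r := hr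
  have hn : (r+1)^2 = (r+1) + (r+1)*r := by ring
  have hmn : r+1 ≤ (r+1)^2 := Nat.le_self_pow two_ne_zero _
  have hcv : ∀ u : Fin ((r+1)^2), ¬ (u:ℕ) < r+1 → ((u:ℕ) - (r+1))/r < r+1 := by
    intro u hu
    rw [Nat.div_lt_iff_lt_mul hr0]
    have h2 := u.2
    omega
  apply domNum_eq_classes (starG r)
    (fun u => if h : (u:ℕ) < r+1 then ⟨(u:ℕ), h⟩ else ⟨((u:ℕ) - (r+1))/r, hcv u h⟩)
    (fun j => ⟨(j:ℕ), lt_of_lt_of_le j.2 hmn⟩)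
  · rintro u v ⟨hne, ⟨h1, h2, h3⟩ | ⟨h1, h2, h3⟩⟩
    · rw [dif_pos h1, dif_neg (by omega)]
      exact Fin.ext h3.symm
    · rw [dif_neg (by omega), dif_pos h1]
      exact Fin.ext h3
  · intro j
    rw [dif_pos (show ((⟨(j:ℕ), lt_of_lt_of_le j.2 hmn⟩ : Fin ((r+1)^2)):ℕ) < r+1 from j.2)]
  · intro j v hcveq hne
    by_cases h : (v:ℕ) < r+1
    · exfalso
      apply hne
      rw [dif_pos h] at hcveq
      have hval : (v:ℕ) = (j:ℕ) := congrArg Fin.val hcveq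
      exact Fin.ext hval
    · rw [dif_neg h] at hcveq
      have h3 : ((v:ℕ) - (r+1))/r = (j:ℕ) := congrArg Fin.val hcveq
      rw [starG_adj]
      refine ⟨?_, Or.inl ⟨j.2, by omega, h3⟩⟩
      intro heq
      have hval2 : (j:ℕ) = (v:ℕ) := congrArg Fin.val heq
      have hj2 := j.2
      omega

lemma deg_pairG (r : ℕ) (hr : 1 ≤ r) (i : Fin ((r+1)^2)) :
    deg (pairG r) i = if (i:ℕ) < r+1 then r else 1 := by
  have hn : (r+1)^2 = (r+1) + r*(r+1) := by ring
  have heven : r*(r+1) = 2*(r*(r+1)/2) := by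
    obtain ⟨w, hw⟩ := Nat.even_mul_succ_self r
    omega
  have hin := i.2
  rw [deg_eq_card_filter]
  by_cases hi : (i:ℕ) < r+1
  · rw [if_pos hi]
    have key : (univ.filter ((pairG r).Adj i)) =
        ((univ.filter fun v : Fin ((r+1)^2) => 0 ≤ (v:ℕ) ∧ (v:ℕ) < 0 + (r+1))).erase i := by
      ext v
      simp only [Finset.mem_filter, Finset.mem_univ, true_and, Finset.mem_erase]
      rw [pairG_adj]
      constructor
      · rintro ⟨hne, ⟨h1, h2⟩ | ⟨h1, h2, h3⟩⟩
        · exact ⟨hne.symm, by omega, by omega⟩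
        · omega
      · rintro ⟨hne, -, h2⟩
        exact ⟨hne.symm, Or.inl ⟨hi, by omega⟩⟩
    rw [key, Finset.card_erase_of_mem (by
      simp only [Finset.mem_filter, Finset.mem_univ, true_and]; omega)]
    rw [card_filter_Ico _ _ _ (by omega)]
    omega
  · rw [if_neg hi]
    push_neg at hi
    obtain ⟨p, hp1, hp2, hp3, hp4, hp5⟩ :
        ∃ p : ℕ, p < (r+1)^2 ∧ r+1 ≤ p ∧ p ≠ (i:ℕ) ∧ (p - (r+1))/2 = ((i:ℕ) - (r+1))/2 ∧
          ∀ w : ℕ, r+1 ≤ w → w ≠ (i:ℕ) → (w - (r+1))/2 = ((i:ℕ) - (r+1))/2 → w = p := by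
      by_cases hpar : ((i:ℕ) - (r+1)) % 2 = 0
      · exact ⟨(i:ℕ)+1, by omega, by omega, by omega, by omega,
          fun w h1 h2 h3 => by omega⟩
      · exact ⟨(i:ℕ)-1, by omega, by omega, by omega, by omega,
          fun w h1 h2 h3 => by omega⟩
    have key : (univ.filter ((pairG r).Adj i)) = {(⟨p, hp1⟩ : Fin ((r+1)^2))} := by
      ext v
      simp only [Finset.mem_filter, Finset.mem_univ, true_and, Finset.mem_singleton]
      rw [pairG_adj]
      constructor
      · rintro ⟨hne, ⟨h1, h2⟩ | ⟨h1, h2, h3⟩⟩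
        · omega
        · exact Fin.ext (hp5 (v:ℕ) h2 (fun hh => hne (Fin.ext hh.symm)) h3.symm)
      · rintro rfl
        refine ⟨fun hh => hp3 (congrArg Fin.val hh).symm, Or.inr ⟨hi, hp2, hp4.symm⟩⟩
    rw [key, Finset.card_singleton]

lemma domNum_pairG (r : ℕ) (hr : 1 ≤ r) : domNum (pairG r) = 1 + r*(r+1)/2 := by
  have hn : (r+1)^2 = (r+1) + r*(r+1) := by ring
  have heven : r*(r+1) = 2*(r*(r+1)/2) := by
    obtain ⟨w, hw⟩ := Nat.even_mul_succ_self r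
    omega
  have ht1 : 2 ≤ r*(r+1) := by
    calc (2:ℕ) = 1*(1+1) := by norm_num
    _ ≤ r*(r+1) := Nat.mul_le_mul hr (by omega)
  have h0n : (0:ℕ) < (r+1)^2 := by positivity
  have hcv : ∀ u : Fin ((r+1)^2), ¬ (u:ℕ) < r+1 → 1 + ((u:ℕ) - (r+1))/2 < 1 + r*(r+1)/2 := by
    intro u hu
    have h2 := u.2
    omega
  have hctrlt : ∀ j : Fin (1 + r*(r+1)/2), ¬ (j:ℕ) = 0 → (r+1) + 2*((j:ℕ)-1) < (r+1)^2 := by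
    intro j hj
    have h2 := j.2
    omega
  apply domNum_eq_classes (pairG r)
    (fun u => if h : (u:ℕ) < r+1 then ⟨0, Nat.lt_of_lt_of_le Nat.one_pos (by omega)⟩
      else ⟨1 + ((u:ℕ) - (r+1))/2, hcv u h⟩)
    (fun j => if h : (j:ℕ) = 0 then ⟨0, h0n⟩ else ⟨(r+1) + 2*((j:ℕ)-1), hctrlt j h⟩)
  · rintro u v ⟨hne, ⟨h1, h2⟩ | ⟨h1, h2, h3⟩⟩
    · rw [dif_pos h1, dif_pos h2]
    · rw [dif_neg (by omega), dif_neg (by omega)]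
      exact Fin.ext (show 1 + ((u:ℕ) - (r+1))/2 = 1 + ((v:ℕ) - (r+1))/2 by omega)
  · intro j
    by_cases hj : (j:ℕ) = 0
    · rw [dif_pos hj, dif_pos (show ((⟨0, h0n⟩ : Fin ((r+1)^2)):ℕ) < r+1 from Nat.succ_pos r)]
      exact Fin.ext hj.symm
    · rw [dif_neg hj, dif_neg (show ¬ ((⟨(r+1) + 2*((j:ℕ)-1), hctrlt j hj⟩ :
        Fin ((r+1)^2)):ℕ) < r+1 from by simp only [Fin.val_mk]; omega)]
      exact Fin.ext (show 1 + ((r+1) + 2*((j:ℕ)-1) - (r+1))/2 = (j:ℕ) by omega)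
  · intro j v hcveq hne
    by_cases hj : (j:ℕ) = 0
    · rw [dif_pos hj] at hne ⊢
      by_cases h : (v:ℕ) < r+1
      · rw [pairG_adj]
        exact ⟨fun heq => hne heq.symm, Or.inl ⟨Nat.succ_pos r, h⟩⟩
      · exfalso
        rw [dif_neg h] at hcveq
        have hval : 1 + ((v:ℕ) - (r+1))/2 = (j:ℕ) := congrArg Fin.val hcveq
        omega
    · rw [dif_neg hj] at hne ⊢
      by_cases h : (v:ℕ) < r+1
      · exfalso
        rw [dif_pos h] at hcveq
        have hval : (0:ℕ) = (j:ℕ) := congrArg Fin.val hcveq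
        omega
      · rw [dif_neg h] at hcveq
        have h3 : 1 + ((v:ℕ) - (r+1))/2 = (j:ℕ) := congrArg Fin.val hcveq
        rw [pairG_adj]
        refine ⟨fun heq => hne heq.symm, Or.inr ⟨?_, by omega, ?_⟩⟩
        · exact show r+1 ≤ (r+1) + 2*((j:ℕ)-1) from Nat.le_add_right _ _
        · exact show ((r+1) + 2*((j:ℕ)-1) - (r+1))/2 = ((v:ℕ) - (r+1))/2 by omega
  
lemma slater_val (r : ℕ) (hr : 1 ≤ r) :
    slater ((r+1)^2) (fun i => if (i:ℕ) < r+1 then r else 1) = r+1 := by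
  have hn : (r+1)^2 = (r+1) + r*(r+1) := by ring
  have hmn : r+1 ≤ (r+1)^2 := Nat.le_self_pow two_ne_zero _
  have hpsum : ∀ k, k ≤ r+1 →
      psum (fun i : Fin ((r+1)^2) => if (i:ℕ) < r+1 then r else 1) k = r * k := by
    intro k hk
    unfold psum
    have h1 : ∀ i : Fin ((r+1)^2), (if (i:ℕ) < k then (if (i:ℕ) < r+1 then r else 1) else 0)
        = if (i:ℕ) < k then r else 0 := by
      intro i; split_ifs <;> omega
    rw [Finset.sum_congr rfl fun i _ => h1 i, ← Finset.sum_filter, Finset.sum_const, smul_eq_mul]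
    have h2 : (univ.filter fun i : Fin ((r+1)^2) => (i:ℕ) < k)
        = (univ.filter fun i : Fin ((r+1)^2) => 0 ≤ (i:ℕ) ∧ (i:ℕ) < 0 + k) :=
      Finset.filter_congr fun i _ => by omega
    rw [h2, card_filter_Ico _ _ _ (by omega)]
    ring
  have hmem : r+1 ∈ {k | 1 ≤ k ∧ k ≤ (r+1)^2 ∧
      (r+1)^2 - k ≤ psum (fun i : Fin ((r+1)^2) => if (i:ℕ) < r+1 then r else 1) k} := by
    refine ⟨by omega, hmn, ?_⟩
    rw [hpsum (r+1) le_rfl]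
    have h4 : r * (r+1) = r*(r+1) := rfl
    omega
  unfold slater
  refine le_antisymm (Nat.sInf_le hmem) (le_csInf ⟨r+1, hmem⟩ ?_)
  rintro k ⟨h1, h2, h3⟩
  by_contra hlt
  push_neg at hlt
  rw [hpsum k (by omega)] at h3
  have e1 : r*k ≤ r*r := Nat.mul_le_mul_left r (by omega)
  have e2 : (r+1)^2 = r*r + 2*r + 1 := by ring
  omega

theorem stmt16 (r : ℕ) (hr : 1 ≤ r) :
    ∃ G₁ G₂ : SimpleGraph (Fin ((r + 1) ^ 2)),
      (∀ i, deg G₁ i = if (i : ℕ) < r + 1 then r else 1) ∧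
      (∀ i, deg G₂ i = if (i : ℕ) < r + 1 then r else 1) ∧
      domNum G₁ = slater ((r + 1) ^ 2) (fun i => if (i : ℕ) < r + 1 then r else 1) ∧
      slater ((r + 1) ^ 2) (fun i => if (i : ℕ) < r + 1 then r else 1) = r + 1 ∧
      domNum G₂ = 1 + r * (r + 1) / 2 := by
  refine ⟨starG r, pairG r, deg_starG r hr, deg_pairG r hr, ?_, slater_val r hr,
    domNum_pairG r hr⟩
  rw [slater_val r hr, domNum_starG r hr]
end

section
/- Let d = (d_1, ..., d_n) be a non-increasing degree sequence of a forest with all entries positive, and let k_γ = min{k ∈ [n] : Σ_{i=1}^k d_i ≥ Σ_{i=k+1}^n d_i}. Then Σ_{i=1}^{k_γ} d_i = Σ_{i=k_γ+1}^n d_i whenever either k_γ = n_{≥2}(d) and n_1(d) ≥ Σ_{i=1}^{n_{≥2}(d)} d_i, or k_γ > n_{≥2}(d). -/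
open Finset

open Finset

section Aux

lemma psum_add_ssum {n : ℕ} (d : Fin n → ℕ) (k : ℕ) :
    psum d k + ssum d k = ∑ i, d i := by
  unfold psum ssum
  rw [← Finset.sum_add_distrib]
  refine Finset.sum_congr rfl fun i _ => ?_
  by_cases h : (i : ℕ) < k
  · simp [h, Nat.not_le.mpr h]
  · simp [h, Nat.le_of_not_lt h]

lemma psum_succ {n : ℕ} (d : Fin n → ℕ) {k : ℕ} (hk : k < n) :
    psum d (k + 1) = psum d k + d ⟨k, hk⟩ := by
  unfold psum
  have : ∀ i : Fin n, (if (i : ℕ) < k + 1 then d i else 0)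
      = (if (i : ℕ) < k then d i else 0) + (if i = ⟨k, hk⟩ then d i else 0) := by
    intro i
    by_cases h2 : i = ⟨k, hk⟩
    · subst h2; simp
    · have : (i : ℕ) ≠ k := fun he => h2 (Fin.ext he)
      by_cases h1 : (i : ℕ) < k
      · simp [h1, h2, Nat.lt_succ_of_lt h1]
      · have : ¬ (i : ℕ) < k + 1 := by omega
        simp [h1, h2, this]
  rw [Finset.sum_congr rfl fun i _ => this i, Finset.sum_add_distrib,
    Finset.sum_ite_eq' Finset.univ (⟨k, hk⟩ : Fin n)]
  simp

lemma deg_eq {V : Type*} (G : SimpleGraph V) (v : V) [Fintype (G.neighborSet v)] :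
    deg G v = G.degree v := by
  haveI : Fintype {u // G.Adj v u} := ‹Fintype (G.neighborSet v)›
  rw [← SimpleGraph.card_neighborSet_eq_degree, deg, Nat.card_eq_fintype_card]
  exact Fintype.card_congr (Equiv.refl _)

lemma nge2_iff {n : ℕ} (d : Fin n → ℕ) (hd : Antitone d) (hpos : ∀ i, 1 ≤ d i) (i : Fin n) :
    2 ≤ d i ↔ (i : ℕ) < nGe2 d := by
  constructor
  · intro h
    have hsub : Finset.Iic i ⊆ Finset.univ.filter fun j => 2 ≤ d j := by
      intro j hj
      simp only [Finset.mem_Iic] at hj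
      exact Finset.mem_filter.mpr ⟨Finset.mem_univ _, le_trans h (hd hj)⟩
    have := Finset.card_le_card hsub
    rw [Fin.card_Iic] at this
    unfold nGe2
    omega
  · intro h
    by_contra hc
    have h1 : d i ≤ 1 := by omega
    have hsub : (Finset.univ.filter fun j => 2 ≤ d j) ⊆ Finset.Iio i := by
      intro j hj
      simp only [Finset.mem_filter] at hj
      simp only [Finset.mem_Iio]
      by_contra hji
      have := hd (le_of_not_gt hji)
      omega
    have := Finset.card_le_card hsub
    rw [Fin.card_Iio] at this
    unfold nGe2 at h
    omega

end Aux


theorem stmt17 {n : ℕ} (d : Fin n → ℕ) (hd : Antitone d) (hpos : ∀ i, 1 ≤ d i)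
    (hreal : ∃ F : SimpleGraph (Fin n), IsForestReal d F)
    (kγ : ℕ) (hkγ : kγ = sInf {k | 1 ≤ k ∧ k ≤ n ∧ ssum d k ≤ psum d k})
    (h : (kγ = nGe2 d ∧ psum d (nGe2 d) ≤ nCount d 1) ∨ nGe2 d < kγ) :
    psum d kγ = ssum d kγ := by
  classical
  rcases Nat.eq_zero_or_pos n with hn | hn
  · subst hn
    simp [psum, ssum]
  -- total sum is even
  obtain ⟨F, hac, hdeg⟩ := hreal
  have hd2 : ∀ i, d i = F.degree i := fun i => by rw [← hdeg i, deg_eq]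
  have hS : Even (∑ i, d i) := by
    have h2 : (∑ i, d i) = 2 * F.edgeFinset.card := by
      rw [Finset.sum_congr rfl fun i _ => hd2 i,
        SimpleGraph.sum_degrees_eq_twice_card_edges]
    exact h2 ▸ even_two_mul _
  -- kγ is in the set
  have hne : {k | 1 ≤ k ∧ k ≤ n ∧ ssum d k ≤ psum d k}.Nonempty := by
    refine ⟨n, hn, le_refl n, ?_⟩
    have : ssum d n = 0 := by
      unfold ssum
      refine Finset.sum_eq_zero fun i _ => ?_
      simp [Nat.not_le.mpr i.isLt]
    omega
  have hmem : kγ ∈ {k | 1 ≤ k ∧ k ≤ n ∧ ssum d k ≤ psum d k} := hkγ ▸ Nat.sInf_mem hne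
  obtain ⟨hk1, hkn, hle⟩ := hmem
  rcases h with ⟨hkeq, hcnt⟩ | hlt
  · -- Case 1: kγ = nGe2 d and psum ≤ nCount 1
    subst hkeq
    have hcompl : nGe2 d + nCount d 1 = n := by
      have hfc : (Finset.univ.filter fun i : Fin n => d i = 1)
          = Finset.univ.filter fun i => ¬ 2 ≤ d i := by
        refine Finset.filter_congr fun i _ => ?_
        have := hpos i
        constructor <;> intro <;> omega
      rw [nGe2, nCount, hfc, Finset.card_filter_add_card_filter_not,
        Finset.card_univ, Fintype.card_fin]
    have hss : ssum d (nGe2 d) = nCount d 1 := by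
      have : ssum d (nGe2 d) = ∑ i : Fin n, if nGe2 d ≤ (i : ℕ) then 1 else 0 := by
        unfold ssum
        refine Finset.sum_congr rfl fun i _ => ?_
        by_cases hi : nGe2 d ≤ (i : ℕ)
        · have h2 : ¬ 2 ≤ d i := fun hge =>
            absurd ((nge2_iff d hd hpos i).mp hge) (by omega)
          have := hpos i
          simp only [if_pos hi]
          omega
        · simp [hi]
      rw [this, ← Finset.card_filter, nCount]
      congr 1
      refine Finset.filter_congr fun i _ => ?_
      have h2 := nge2_iff d hd hpos i
      have hp := hpos i
      constructor
      · intro hi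
        have : ¬ 2 ≤ d i := fun hg => absurd (h2.mp hg) (by omega)
        omega
      · intro hi
        have : ¬ (i : ℕ) < nGe2 d := fun hl => by have := h2.mpr hl; omega
        omega
    omega
  · -- Case 2: nGe2 d < kγ
    set m := kγ - 1 with hm
    have hmn : m < n := by omega
    have hdm : d ⟨m, hmn⟩ = 1 := by
      have h2 : ¬ 2 ≤ d ⟨m, hmn⟩ := fun hge => by
        have := (nge2_iff d hd hpos ⟨m, hmn⟩).mp hge
        simp only [Fin.val_mk] at this
        omega
      have := hpos ⟨m, hmn⟩
      omega
    have hnotmem : m ∉ {k | 1 ≤ k ∧ k ≤ n ∧ ssum d k ≤ psum d k} := by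
      intro hmem
      have := Nat.sInf_le hmem
      omega
    have hgt : psum d m < ssum d m := by
      rcases Nat.eq_zero_or_pos m with hm0 | hm1
      · rw [hm0]
        have hp0 : psum d 0 = 0 := by
          unfold psum; exact Finset.sum_eq_zero fun i _ => by simp
        have hs0 : ssum d 0 = ∑ i, d i := by
          unfold ssum
          exact Finset.sum_congr rfl fun i _ => by simp
        have : 1 ≤ ∑ i, d i :=
          le_trans (hpos ⟨0, hn⟩) (Finset.single_le_sum (fun i _ => Nat.zero_le _)
            (Finset.mem_univ (⟨0, hn⟩ : Fin n)))
        omega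
      · by_contra hc
        exact hnotmem ⟨hm1, by omega, le_of_not_gt hc⟩
    have hpsucc : psum d kγ = psum d m + 1 := by
      have : kγ = m + 1 := by omega
      rw [this, psum_succ d hmn, hdm]
    have e1 := psum_add_ssum d m
    have e2 := psum_add_ssum d kγ
    obtain ⟨t, ht⟩ := hS
    omega
end

section
/- Let (a_1, ..., a_m) and (a'_1, ..., a'_n) be non-increasing sequences of non-negative integers, and let (b_1, ..., b_m) and (b'_1, ..., b'_n) be sequences of non-negative integers with a_i ≤ b_i for all i and a'_j ≤ b'_j for all j. Then there exists a bipartite graph H with partite sets {u_1, ..., u_m} and {v_1, ..., v_n} satisfying a_i ≤ deg_H(u_i) ≤ b_i for all i and a'_j ≤ deg_H(v_j) ≤ b'_j for all j, if and only if for every k ∈ [m], Σ_{i=1}^k a_i ≤ Σ_{j=1}^n min{k, b'_j}, and for every k ∈ [n], Σ_{j=1}^k a'_j ≤ Σ_{i=1}^m min{k, b_i}. -/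
open Finset

namespace GR

variable {m n : ℕ}

def rS (M : Fin m → Fin n → Bool) (i : Fin m) : ℕ := ∑ j, if M i j then 1 else 0
def cS (M : Fin m → Fin n → Bool) (j : Fin n) : ℕ := ∑ i, if M i j then 1 else 0
def stM (M : Fin m → Fin n → Bool) (i : Fin m) (j : Fin n) : Fin m → Fin n → Bool :=
  fun p q => if p = i ∧ q = j then true else M p q
def upd (M : Fin m → Fin n → Bool) (i : Fin m) (j : Fin n) (i' : Fin m) : Fin m → Fin n → Bool :=
  fun p q => if p = i ∧ q = j then true else if p = i' ∧ q = j then false else M p q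

lemma sum_pt {α : Type*} [Fintype α] [DecidableEq α] (j : α) (f : α → ℕ) :
    ∑ q, f q = f j + ∑ q ∈ univ.erase j, f q :=
  (Finset.add_sum_erase univ f (mem_univ j)).symm

lemma sum_ind_diff_pt {α : Type*} [Fintype α] [DecidableEq α] (j : α) (f g : α → Bool)
    (h : ∀ q, q ≠ j → f q = g q) :
    (∑ q, if f q then 1 else 0) + (if g j then 1 else 0)
      = (∑ q, if g q then 1 else 0) + (if f j then 1 else 0) := by
  have e : (∑ q ∈ univ.erase j, if f q then (1:ℕ) else 0)
      = ∑ q ∈ univ.erase j, if g q then 1 else 0 :=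
    Finset.sum_congr rfl fun q hq => by rw [h q (Finset.ne_of_mem_erase hq)]
  rw [sum_pt j (fun q => if f q then 1 else 0), sum_pt j (fun q => if g q then 1 else 0), e]
  ring

lemma sum_ind_diff_pt2 {α : Type*} [Fintype α] [DecidableEq α] (i i' : α) (hne : i' ≠ i)
    (f g : α → Bool) (h : ∀ p, p ≠ i → p ≠ i' → f p = g p)
    (hfi : f i = true) (hgi : g i = false) (hfi' : f i' = false) (hgi' : g i' = true) :
    (∑ q, if f q then 1 else 0) = (∑ q, if g q then 1 else 0) := by
  have key : ∀ (u : α → Bool), ∑ q, (if u q then (1:ℕ) else 0)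
      = (if u i then 1 else 0) + ((if u i' then 1 else 0)
        + ∑ q ∈ (univ.erase i).erase i', (if u q then 1 else 0)) := by
    intro u
    rw [sum_pt i (fun q => if u q then 1 else 0)]
    congr 1
    exact (Finset.add_sum_erase _ _ (Finset.mem_erase.2 ⟨hne, mem_univ i'⟩)).symm
  have e : (∑ q ∈ (univ.erase i).erase i', if f q then (1:ℕ) else 0)
      = ∑ q ∈ (univ.erase i).erase i', if g q then 1 else 0 :=
    Finset.sum_congr rfl fun p hp => by
      rw [h p (Finset.ne_of_mem_erase (Finset.mem_of_mem_erase hp)) (Finset.ne_of_mem_erase hp)]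
  rw [key f, key g, hfi, hgi, hfi', hgi', e]
  ring

section updlemmas
variable {M : Fin m → Fin n → Bool} {i i' : Fin m} {j : Fin n}

lemma upd_ne (h0 : M i j = false) (h1 : M i' j = true) : i ≠ i' := by
  rintro rfl; rw [h0] at h1; exact Bool.false_ne_true h1

lemma upd_rS (h0 : M i j = false) (h1 : M i' j = true) (p : Fin m) :
    rS (upd M i j i') p + (if p = i' then 1 else 0) = rS M p + (if p = i then 1 else 0) := by
  have hne := upd_ne h0 h1
  by_cases hp : p = i
  · subst hp
    rw [if_neg (fun h => hne h), if_pos rfl]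
    have := sum_ind_diff_pt j (fun q => upd M p j i' p q) (fun q => M p q)
      (by intro q hq; simp [upd, hq])
    simpa [upd, hne, h0, rS] using this
  · by_cases hp' : p = i'
    · subst hp'
      rw [if_pos rfl, if_neg hp]
      have hpi : p ≠ i := hp
      have := sum_ind_diff_pt j (fun q => upd M i j p p q) (fun q => M p q)
        (by intro q hq; simp [upd, hq])
      simp [upd, hpi, h1, rS] at this ⊢
      omega
    · rw [if_neg hp', if_neg hp]
      unfold rS
      congr 1
      exact Finset.sum_congr rfl fun q _ => by simp [upd, hp, hp']

lemma upd_cS (h0 : M i j = false) (h1 : M i' j = true) (q : Fin n) :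
    cS (upd M i j i') q = cS M q := by
  have hne := upd_ne h0 h1
  by_cases hq : q = j
  · subst hq
    exact sum_ind_diff_pt2 i i' (fun h => hne h.symm)
      (fun p => upd M i q i' p q) (fun p => M p q)
      (by intro p hp hp'; simp [upd, hp, hp'])
      (by simp [upd]) h0 (by have h2 : i' ≠ i := fun h => hne h.symm; simp [upd, h2]) h1
  · unfold cS
    exact Finset.sum_congr rfl fun p _ => by simp [upd, hq]

lemma stM_rS (h0 : M i j = false) (p : Fin m) :
    rS (stM M i j) p = rS M p + (if p = i then 1 else 0) := by
  by_cases hp : p = i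
  · subst hp
    rw [if_pos rfl]
    have := sum_ind_diff_pt j (fun q => stM M p j p q) (fun q => M p q)
      (by intro q hq; simp [stM, hq])
    simp [stM, h0, rS] at this ⊢
    omega
  · rw [if_neg hp, add_zero]
    unfold rS
    exact Finset.sum_congr rfl fun q _ => by simp [stM, hp]

lemma stM_cS (h0 : M i j = false) (q : Fin n) :
    cS (stM M i j) q = cS M q + (if q = j then 1 else 0) := by
  by_cases hq : q = j
  · subst hq
    rw [if_pos rfl]
    have := sum_ind_diff_pt i (fun p => stM M i q p q) (fun p => M p q)
      (by intro p hp; simp [stM, hp])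
    simp [stM, h0, cS] at this ⊢
    omega
  · rw [if_neg hq, add_zero]
    unfold cS
    exact Finset.sum_congr rfl fun p _ => by simp [stM, hq]

end updlemmas

inductive W : (Fin m → Fin n → Bool) → Fin m → Fin n → Prop
  | base {M : Fin m → Fin n → Bool} {i : Fin m} {j : Fin n} : M i j = false → W M i j
  | step {M : Fin m → Fin n → Bool} {i : Fin m} {j' : Fin n} {i' : Fin m} {j : Fin n} :
      M i j' = false → M i' j' = true → W (upd M i j' i') i' j → W M i j

theorem augCol {M : Fin m → Fin n → Bool} {i : Fin m} {j : Fin n} (h : W M i j) :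
    ∃ M', (∀ p, rS M' p = rS M p + (if p = i then 1 else 0)) ∧
          (∀ q, cS M' q = cS M q + (if q = j then 1 else 0)) := by
  induction h with
  | base h0 => exact ⟨stM _ _ _, stM_rS h0, stM_cS h0⟩
  | @step M i j' i' j h0 h1 _ IH =>
    obtain ⟨M', hr, hc⟩ := IH
    refine ⟨M', fun p => ?_, fun q => ?_⟩
    · have e1 := upd_rS h0 h1 p
      have e2 := hr p
      by_cases hp' : p = i' <;> by_cases hp : p = i <;>
        simp [hp, hp'] at e1 e2 ⊢ <;> omega
    · rw [hc q, upd_cS h0 h1 q]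

theorem augRow {M : Fin m → Fin n → Bool} {i : Fin m} {j : Fin n} (h : W M i j) :
    ∀ i1, M i1 j = true →
    ∃ M', (∀ q, cS M' q = cS M q) ∧
          (∀ p, rS M' p + (if p = i1 then 1 else 0) = rS M p + (if p = i then 1 else 0)) := by
  induction h with
  | @base M i j h0 =>
    intro i1 h2
    exact ⟨upd M i j i1, upd_cS h0 h2, upd_rS h0 h2⟩
  | @step M i j' i' j h0 h1 _ IH =>
    intro i1 h2
    by_cases hii : i1 = i
    · subst hii
      exact ⟨M, fun q => rfl, fun p => rfl⟩
    · by_cases hM1 : upd M i j' i' i1 j = true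
      · obtain ⟨M', hc, hr⟩ := IH i1 hM1
        refine ⟨M', fun q => by rw [hc q, upd_cS h0 h1 q], fun p => ?_⟩
        have e1 := upd_rS h0 h1 p
        have e2 := hr p
        by_cases hp' : p = i' <;> by_cases hp : p = i <;> by_cases hp1 : p = i1 <;>
          simp [hp, hp', hp1] at e1 e2 ⊢ <;> omega
      · have hii' : i1 = i' ∧ j = j' := by
          by_contra hcon
          apply hM1
          simp only [upd]
          rcases Decidable.em (j = j') with rfl | hj
          · have : ¬ i1 = i' := fun h => hcon ⟨h, rfl⟩
            simp [this, hii, h2]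
          · simp [hj, h2]
        obtain ⟨rfl, rfl⟩ := hii'
        exact ⟨upd M i j i1, upd_cS h0 h1, upd_rS h0 h1⟩

theorem appendW {M : Fin m → Fin n → Bool} {i : Fin m} {j' : Fin n} (h : W M i j') :
    ∀ (p : Fin m) (j : Fin n), M p j' = true → M p j = false → W M i j := by
  induction h with
  | @base M i j0 h0 =>
    intro p j h1 h2
    have hpi : p ≠ i := fun h => by rw [h, h0] at h1; exact Bool.false_ne_true h1
    refine W.step h0 h1 (W.base ?_)
    simp only [upd]
    rcases Decidable.em (j = j0) with rfl | hj
    · simp [hpi]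
    · simp [hj, h2]
  | @step M i j0 i' j' h0 h1 _ IH =>
    intro p j h1' h2'
    by_cases hA : p = i' ∧ j' = j0
    · obtain ⟨rfl, rfl⟩ := hA
      refine W.step h0 h1 (W.base ?_)
      have hpi : ¬ (p = i ∧ j = j') := fun h => (upd_ne h0 h1) h.1.symm
      show (if (p = i ∧ j = j') then true else if (p = p ∧ j = j') then false else M p j) = false
      by_cases hj : j = j'
      · rw [if_neg hpi, if_pos ⟨rfl, hj⟩]
      · rw [if_neg hpi, if_neg (fun h => hj h.2)]
        exact h2'
    · by_cases hB : p = i ∧ j = j0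
      · obtain ⟨rfl, rfl⟩ := hB
        exact W.base h0
      · refine W.step h0 h1 (IH p j ?_ ?_)
        · show (if (p = i ∧ j' = j0) then true else if (p = i' ∧ j' = j0) then false else M p j') = true
          by_cases hC : p = i ∧ j' = j0
          · rw [if_pos hC]
          · rw [if_neg hC, if_neg hA]
            exact h1'
        · show (if (p = i ∧ j = j0) then true else if (p = i' ∧ j = j0) then false else M p j) = false
          by_cases hC : p = i' ∧ j = j0
          · rw [if_neg hB, if_pos hC]
          · rw [if_neg hB, if_neg hC]
            exact h2'

lemma psum_eq (a : Fin m → ℕ) {k : ℕ} (hk : k ≤ m) :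
    psum a k = ∑ t : Fin k, a (Fin.castLE hk t) := by
  rw [psum, ← Finset.sum_filter]
  refine Finset.sum_bij' (fun i hi => (⟨(i : ℕ), (Finset.mem_filter.1 hi).2⟩ : Fin k))
    (fun t _ => Fin.castLE hk t) ?_ ?_ ?_ ?_ ?_
  · intro a _; exact mem_univ _
  · intro t _
    simp [Fin.castLE, Fin.lt_iff_val_lt_val, t.2]
  · intro a _; rfl
  · intro t _; rfl
  · intro a _; rfl

lemma sum_le_psum (a : Fin m → ℕ) (ha : Antitone a) (R : Finset (Fin m)) :
    ∑ i ∈ R, a i ≤ psum a R.card := by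
  have hkm : R.card ≤ m := by simpa using R.card_le_univ
  set k := R.card with hk
  let f := R.orderIsoOfFin hk.symm
  have hmono : StrictMono fun t : Fin k => ((f t : Fin m) : ℕ) := by
    intro s t hst
    exact (Fin.lt_iff_val_lt_val).1 (f.strictMono hst)
  have hle : ∀ (v : ℕ) (h : v < k), v ≤ ((f ⟨v, h⟩ : Fin m) : ℕ) := by
    intro v
    induction v with
    | zero => intro h; exact Nat.zero_le _
    | succ v IH =>
      intro h
      have hv : v < k := Nat.lt_of_succ_lt h
      have h2 : ((f ⟨v, hv⟩ : Fin m) : ℕ) < ((f ⟨v+1, h⟩ : Fin m) : ℕ) :=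
        hmono (show (⟨v, hv⟩ : Fin k) < ⟨v+1, h⟩ from by simp [Fin.lt_iff_val_lt_val])
      have h3 := IH hv
      omega
  calc ∑ i ∈ R, a i = ∑ x : {x // x ∈ R}, a x := (Finset.sum_coe_sort R a).symm
    _ = ∑ t : Fin k, a (f t) := (Equiv.sum_comp f.toEquiv (fun x : {x // x ∈ R} => a x)).symm
    _ ≤ ∑ t : Fin k, a (Fin.castLE hkm t) := by
        refine Finset.sum_le_sum fun t _ => ha ?_
        rw [Fin.le_def]
        simpa using hle t.1 t.2
    _ = psum a k := (psum_eq a hkm).symm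

theorem cut (a : Fin m → ℕ) (b' : Fin n → ℕ) (ha : Antitone a)
    (M : Fin m → Fin n → Bool) (i0 : Fin m) (hd : rS M i0 < a i0)
    (hfull : ∀ j, W M i0 j → b' j ≤ cS M j)
    (hrows : ∀ i, (∃ j, W M i0 j ∧ M i j = true) → rS M i ≤ a i) :
    ∃ k, 1 ≤ k ∧ k ≤ m ∧ ¬ (psum a k ≤ ∑ j, min k (b' j)) := by
  classical
  set R : Finset (Fin m) :=
    univ.filter (fun i => i = i0 ∨ ∃ j, W M i0 j ∧ M i j = true) with hR
  have hi0R : i0 ∈ R := by simp [hR]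
  refine ⟨R.card, Finset.card_pos.2 ⟨i0, hi0R⟩, by simpa using R.card_le_univ, fun hcond => ?_⟩
  have step1 : ∑ j, min R.card (b' j) ≤ ∑ j, ∑ i ∈ R, (if M i j then 1 else 0) := by
    refine Finset.sum_le_sum fun j _ => ?_
    by_cases hW : W M i0 j
    · have h1 : b' j ≤ cS M j := hfull j hW
      have h2 : cS M j = ∑ i ∈ R, (if M i j then 1 else 0) := by
        refine (Finset.sum_subset (Finset.subset_univ R) fun i _ hiR => ?_).symm
        have : M i j = false := by
          cases hM : M i j
          · rfl
          · exact absurd (Finset.mem_filter.2 ⟨Finset.mem_univ i, Or.inr ⟨j, hW, hM⟩⟩) hiR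
        simp [this]
      exact le_trans (min_le_right _ _) (h1.trans h2.le)
    · have hall : ∀ i ∈ R, M i j = true := by
        intro i hiR
        cases hM : M i j
        · exfalso
          rcases (Finset.mem_filter.1 hiR).2 with rfl | ⟨j', hWj', hMij'⟩
          · exact hW (W.base hM)
          · exact hW (appendW hWj' i j hMij' hM)
        · rfl
      have : ∑ i ∈ R, (if M i j then (1:ℕ) else 0) = R.card := by
        have e := Finset.sum_congr (rfl : R = R)
          (fun i hi => (by rw [hall i hi]; rfl : (if M i j then (1:ℕ) else 0) = 1))
        rw [e, Finset.sum_const, smul_eq_mul, mul_one]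
      exact le_trans (min_le_left _ _) this.ge
  have step2 : ∑ j, ∑ i ∈ R, (if M i j then (1:ℕ) else 0) = ∑ i ∈ R, rS M i := by
    rw [Finset.sum_comm]
    rfl
  have step3 : ∑ i ∈ R, rS M i < ∑ i ∈ R, a i := by
    refine Finset.sum_lt_sum (fun i hiR => ?_) ⟨i0, hi0R, hd⟩
    rcases (Finset.mem_filter.1 hiR).2 with rfl | h
    · exact hd.le
    · exact hrows i h
  have step4 := sum_le_psum a ha R
  omega

def defic (a : Fin m → ℕ) (a' : Fin n → ℕ) (M : Fin m → Fin n → Bool) : ℕ :=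
  ∑ i, (a i - rS M i) + ∑ j, (a' j - cS M j)

theorem key (a b : Fin m → ℕ) (a' b' : Fin n → ℕ) (ha : Antitone a) (hab : ∀ i, a i ≤ b i)
    (cond1 : ∀ k, 1 ≤ k → k ≤ m → psum a k ≤ ∑ j, min k (b' j))
    (M : Fin m → Fin n → Bool) (hfr : ∀ i, rS M i ≤ b i) (hfc : ∀ j, cS M j ≤ b' j)
    (hmin : ∀ N, (∀ i, rS N i ≤ b i) → (∀ j, cS N j ≤ b' j) → defic a a' M ≤ defic a a' N) :
    ∀ i, a i ≤ rS M i := by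
  by_contra hcon
  push_neg at hcon
  obtain ⟨i0, hd⟩ := hcon
  have hfull : ∀ j, W M i0 j → b' j ≤ cS M j := by
    intro j hW
    by_contra hlt
    push_neg at hlt
    obtain ⟨M', hr, hc⟩ := augCol hW
    have hr0 : rS M' i0 = rS M i0 + 1 := by have := hr i0; simpa using this
    have hrp : ∀ p, p ≠ i0 → rS M' p = rS M p := by
      intro p hp; have := hr p; simpa [hp] using this
    have hc0 : cS M' j = cS M j + 1 := by have := hc j; simpa using this
    have hcq : ∀ q, q ≠ j → cS M' q = cS M q := by
      intro q hq; have := hc q; simpa [hq] using this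
    have hfr' : ∀ p, rS M' p ≤ b p := by
      intro p
      by_cases hp : p = i0
      · subst hp; have := hab p; omega
      · rw [hrp p hp]; exact hfr p
    have hfc' : ∀ q, cS M' q ≤ b' q := by
      intro q
      by_cases hq : q = j
      · subst hq; omega
      · rw [hcq q hq]; exact hfc q
    have hlt2 : defic a a' M' < defic a a' M := by
      unfold defic
      have h1 : ∑ p, (a p - rS M' p) < ∑ p, (a p - rS M p) := by
        refine Finset.sum_lt_sum (fun p _ => ?_) ⟨i0, mem_univ i0, ?_⟩
        · by_cases hp : p = i0
          · subst hp; omega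
          · rw [hrp p hp]
        · omega
      have h2 : ∑ q, (a' q - cS M' q) ≤ ∑ q, (a' q - cS M q) := by
        refine Finset.sum_le_sum fun q _ => ?_
        by_cases hq : q = j
        · subst hq; omega
        · rw [hcq q hq]
      omega
    exact absurd (hmin M' hfr' hfc') (by omega)
  have hrows : ∀ i, (∃ j, W M i0 j ∧ M i j = true) → rS M i ≤ a i := by
    rintro i ⟨j, hW, hMij⟩
    by_contra hlt
    push_neg at hlt
    have hii0 : i ≠ i0 := by rintro rfl; omega
    have hii0' : i0 ≠ i := Ne.symm hii0
    obtain ⟨M', hc, hr⟩ := augRow hW i hMij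
    have hr0 : rS M' i0 = rS M i0 + 1 := by have := hr i0; simp [hii0'] at this; omega
    have hri : rS M' i + 1 = rS M i := by have := hr i; simp [hii0] at this; omega
    have hrp : ∀ p, p ≠ i0 → p ≠ i → rS M' p = rS M p := by
      intro p h1 h2; have := hr p; simp [h1, h2] at this; omega
    have hfr' : ∀ p, rS M' p ≤ b p := by
      intro p
      by_cases h1 : p = i0
      · subst h1; have := hab p; omega
      · by_cases h2 : p = i
        · subst h2; have := hfr p; omega
        · rw [hrp p h1 h2]; exact hfr p
    have hfc' : ∀ q, cS M' q ≤ b' q := fun q => by rw [hc q]; exact hfc q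
    have hlt2 : defic a a' M' < defic a a' M := by
      unfold defic
      have h1 : ∑ p, (a p - rS M' p) < ∑ p, (a p - rS M p) := by
        refine Finset.sum_lt_sum (fun p _ => ?_) ⟨i0, mem_univ i0, ?_⟩
        · by_cases h1 : p = i0
          · subst h1; omega
          · by_cases h2 : p = i
            · subst h2; omega
            · rw [hrp p h1 h2]
        · omega
      have h2 : ∑ q, (a' q - cS M' q) ≤ ∑ q, (a' q - cS M q) :=
        Finset.sum_le_sum fun q _ => by rw [hc q]
      omega
    exact absurd (hmin M' hfr' hfc') (by omega)
  obtain ⟨k, h1, h2, h3⟩ := cut a b' ha M i0 hd hfull hrows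
  exact h3 (cond1 k h1 h2)

theorem core (a b : Fin m → ℕ) (a' b' : Fin n → ℕ)
    (ha : Antitone a) (ha' : Antitone a')
    (hab : ∀ i, a i ≤ b i) (hab' : ∀ j, a' j ≤ b' j)
    (cond1 : ∀ k, 1 ≤ k → k ≤ m → psum a k ≤ ∑ j, min k (b' j))
    (cond2 : ∀ k, 1 ≤ k → k ≤ n → psum a' k ≤ ∑ i, min k (b i)) :
    ∃ M : Fin m → Fin n → Bool,
      (∀ i, a i ≤ rS M i ∧ rS M i ≤ b i) ∧ (∀ j, a' j ≤ cS M j ∧ cS M j ≤ b' j) := by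
  classical
  obtain ⟨M, hM, hminm⟩ := Finset.exists_min_image
    (univ.filter (fun N : Fin m → Fin n → Bool =>
      (∀ i, rS N i ≤ b i) ∧ (∀ j, cS N j ≤ b' j))) (defic a a')
    ⟨(fun _ _ => false), Finset.mem_filter.2 ⟨mem_univ _, fun i => by simp [rS], fun j => by simp [cS]⟩⟩
  obtain ⟨-, hfr, hfc⟩ := Finset.mem_filter.1 hM
  have hmin : ∀ N, (∀ i, rS N i ≤ b i) → (∀ j, cS N j ≤ b' j) →
      defic a a' M ≤ defic a a' N := fun N h1 h2 =>
    hminm N (Finset.mem_filter.2 ⟨mem_univ _, h1, h2⟩)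
  have hrows := key a b a' b' ha hab cond1 M hfr hfc hmin
  have hcols := key a' b' a b ha' hab' cond2 (fun j i => M i j)
    (fun j => hfc j) (fun i => hfr i)
    (fun N h1 h2 => by
      have e1 : defic a' a (fun j i => M i j) = defic a a' M := add_comm _ _
      have e2 : defic a' a N = defic a a' (fun i j => N j i) := add_comm _ _
      rw [e1, e2]
      exact hmin _ (fun i => h2 i) (fun j => h1 j))
  exact ⟨M, fun i => ⟨hrows i, hfr i⟩, fun j => ⟨hcols j, hfc j⟩⟩

lemma card_subtype_bool (f : Fin n → Bool) :
    Nat.card {j // f j = true} = ∑ j, if f j then 1 else 0 := by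
  rw [Nat.card_eq_fintype_card, Fintype.card_subtype, Finset.card_filter]

def mkG (M : Fin m → Fin n → Bool) : SimpleGraph (Fin m ⊕ Fin n) where
  Adj x y := match x, y with
    | .inl i, .inr j => M i j = true
    | .inr j, .inl i => M i j = true
    | _, _ => False
  symm := ⟨by rintro (i | j) (i' | j') h <;> simp_all⟩
  loopless := ⟨by rintro (i | j) h <;> exact h⟩

lemma deg_inl (H : SimpleGraph (Fin m ⊕ Fin n))
    (hll : ∀ i i', ¬ H.Adj (.inl i) (.inl i')) (i : Fin m) :
    deg H (.inl i) = Nat.card {j : Fin n // H.Adj (.inl i) (.inr j)} := by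
  refine Nat.card_congr ⟨fun x => ?_, fun x => ⟨.inr x.1, x.2⟩, ?_, ?_⟩
  · rcases x with ⟨u, h⟩
    rcases u with i' | j
    · exact absurd h (hll i i')
    · exact ⟨j, h⟩
  · rintro ⟨(i' | j), h⟩
    · exact absurd h (hll i i')
    · rfl
  · rintro ⟨j, h⟩; rfl

lemma deg_inr (H : SimpleGraph (Fin m ⊕ Fin n))
    (hrr : ∀ j j', ¬ H.Adj (.inr j) (.inr j')) (j : Fin n) :
    deg H (.inr j) = Nat.card {i : Fin m // H.Adj (.inr j) (.inl i)} := by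
  refine Nat.card_congr ⟨fun x => ?_, fun x => ⟨.inl x.1, x.2⟩, ?_, ?_⟩
  · rcases x with ⟨u, h⟩
    rcases u with i' | j'
    · exact ⟨i', h⟩
    · exact absurd h (hrr j j')
  · rintro ⟨(i' | j'), h⟩
    · rfl
    · exact absurd h (hrr j j')
  · rintro ⟨i', h⟩; rfl

lemma mkG_deg_inl (M : Fin m → Fin n → Bool) (i : Fin m) :
    deg (mkG M) (.inl i) = rS M i := by
  rw [deg_inl (mkG M) (fun i i' h => h) i]
  exact card_subtype_bool (fun j => M i j)

lemma mkG_deg_inr (M : Fin m → Fin n → Bool) (j : Fin n) :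
    deg (mkG M) (.inr j) = cS M j := by
  rw [deg_inr (mkG M) (fun j j' h => h) j]
  exact card_subtype_bool (fun i => M i j)

lemma count (a : Fin m → ℕ) (b' : Fin n → ℕ) (M : Fin m → Fin n → Bool)
    (hra : ∀ i, a i ≤ rS M i) (hcb : ∀ j, cS M j ≤ b' j) (k : ℕ) (hk : k ≤ m) :
    psum a k ≤ ∑ j, min k (b' j) := by
  have h1 : psum a k ≤ ∑ i : Fin m, (if (i : ℕ) < k then rS M i else 0) := by
    refine Finset.sum_le_sum fun i _ => ?_
    split
    · exact hra i
    · exact le_rfl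
  have h2 : ∑ i : Fin m, (if (i : ℕ) < k then rS M i else 0)
      = ∑ j, ∑ i : Fin m, (if (i : ℕ) < k then (if M i j then 1 else 0) else 0) := by
    rw [← Finset.sum_comm]
    refine Finset.sum_congr rfl fun i _ => ?_
    split
    · rfl
    · simp
  have h3 : ∀ j, (∑ i : Fin m, (if (i : ℕ) < k then (if M i j then (1:ℕ) else 0) else 0))
      ≤ min k (b' j) := by
    intro j
    refine le_min ?_ ?_
    · calc ∑ i : Fin m, (if (i : ℕ) < k then (if M i j then (1:ℕ) else 0) else 0)
          ≤ ∑ i : Fin m, (if (i : ℕ) < k then (1:ℕ) else 0) := by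
            refine Finset.sum_le_sum fun i _ => ?_
            split
            · split <;> omega
            · exact le_rfl
        _ = psum (fun _ => 1) k := rfl
        _ = k := by rw [psum_eq _ hk]; simp
    · calc ∑ i : Fin m, (if (i : ℕ) < k then (if M i j then (1:ℕ) else 0) else 0)
          ≤ ∑ i : Fin m, (if M i j then (1:ℕ) else 0) := by
            refine Finset.sum_le_sum fun i _ => ?_
            split
            · exact le_rfl
            · exact Nat.zero_le _
        _ = cS M j := rfl
        _ ≤ b' j := hcb j
  calc psum a k ≤ _ := h1
    _ = _ := h2
    _ ≤ ∑ j, min k (b' j) := Finset.sum_le_sum fun j _ => h3 j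

end GR

theorem stmt18 (m n : ℕ) (a b : Fin m → ℕ) (a' b' : Fin n → ℕ)
    (ha : Antitone a) (ha' : Antitone a')
    (hab : ∀ i, a i ≤ b i) (hab' : ∀ j, a' j ≤ b' j) :
    (∃ H : SimpleGraph (Fin m ⊕ Fin n),
      (∀ i i', ¬ H.Adj (Sum.inl i) (Sum.inl i')) ∧
      (∀ j j', ¬ H.Adj (Sum.inr j) (Sum.inr j')) ∧
      (∀ i, a i ≤ deg H (Sum.inl i) ∧ deg H (Sum.inl i) ≤ b i) ∧
      (∀ j, a' j ≤ deg H (Sum.inr j) ∧ deg H (Sum.inr j) ≤ b' j)) ↔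
    ((∀ k, 1 ≤ k → k ≤ m → psum a k ≤ ∑ j : Fin n, min k (b' j)) ∧
     (∀ k, 1 ≤ k → k ≤ n → psum a' k ≤ ∑ i : Fin m, min k (b i))) := by
  constructor
  · rintro ⟨H, hll, hrr, hA, hB⟩
    classical
    set M : Fin m → Fin n → Bool :=
      fun i j => if H.Adj (.inl i) (.inr j) then true else false with hM
    have hMiff : ∀ i j, M i j = true ↔ H.Adj (.inl i) (.inr j) := by
      intro i j
      by_cases h : H.Adj (.inl i) (.inr j) <;> simp [hM, h]
    have hrS : ∀ i, deg H (.inl i) = GR.rS M i := by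
      intro i
      rw [GR.deg_inl H hll i]
      exact (Nat.card_congr (Equiv.subtypeEquivRight fun j => (hMiff i j).symm)).trans
        (GR.card_subtype_bool (fun j => M i j))
    have hcS : ∀ j, deg H (.inr j) = GR.cS M j := by
      intro j
      rw [GR.deg_inr H hrr j]
      exact (Nat.card_congr (Equiv.subtypeEquivRight fun i =>
          (H.adj_comm _ _).trans (hMiff i j).symm)).trans
        (GR.card_subtype_bool (fun i => M i j))
    refine ⟨fun k hk1 hk2 => ?_, fun k hk1 hk2 => ?_⟩
    · exact GR.count a b' M (fun i => by rw [← hrS i]; exact (hA i).1)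
        (fun j => by rw [← hcS j]; exact (hB j).2) k hk2
    · exact GR.count a' b (fun j i => M i j)
        (fun j => by show a' j ≤ GR.cS M j; rw [← hcS j]; exact (hB j).1)
        (fun i => by show GR.rS M i ≤ b i; rw [← hrS i]; exact (hA i).2) k hk2
  · rintro ⟨c1, c2⟩
    obtain ⟨M, hrow, hcol⟩ := GR.core a b a' b' ha ha' hab hab' c1 c2
    refine ⟨GR.mkG M, fun i i' h => h, fun j j' h => h, fun i => ?_, fun j => ?_⟩
    · rw [GR.mkG_deg_inl]; exact hrow i
    · rw [GR.mkG_deg_inr]; exact hcol j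
end
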